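/- Fix k ≥ 1 and let T^n denote the regular ordered tree of height n with branching number k. Every strong embedding g : T^l → T^n with l < n factors as g = g₂ ∘ g₁ where g₁ : T^l → T^{l+1} and g₂ : T^{l+1} → T^n are strong embeddings; moreover the same holds with 'strong embedding' replaced by 'strong leaf preserving embedding' throughout. -/

import Mathlib

noncomputable section
open scoped Classical

/-- A finite ordered tree: carrier `Fin card`, a tree partial order `le`
(any two elements have a meet, predecessors of any element are linearly
ordered), together with the induced lexicographic linear order `lex`
(a linear extension of `le` which does not interleave incomparable subtrees). -/
structure OTree where
  card : ℕ
  le : Fin card → Fin card → Prop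
  le_refl : ∀ v, le v v
  le_antisymm : ∀ v w, le v w → le w v → v = w
  le_trans : ∀ u v w, le u v → le v w → le u w
  pred_linear : ∀ v u w, le u v → le w v → le u w ∨ le w u
  meet_exists : ∀ v w, ∃ u, le u v ∧ le u w ∧ ∀ z, le z v → le z w → le z u
  lex : Fin card → Fin card → Prop
  lex_total : ∀ v w, lex v w ∨ lex w v
  lex_antisymm : ∀ v w, lex v w → lex w v → v = w
  lex_trans : ∀ u v w, lex u v → lex v w → lex u w
  le_lex : ∀ v w, le v w → lex v w
  lex_compat : ∀ v w v' w', ¬ le v w → ¬ le w v → lex v w → le v v' → le w w' → lex v' w'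

namespace OTree

variable (T : OTree)

/-- The meet (infimum, largest common predecessor) of two nodes. -/
def meet (v w : Fin T.card) : Fin T.card := Classical.choose (T.meet_exists v w)

/-- A leaf is a maximal node. -/
def Leaf (v : Fin T.card) : Prop := ∀ w, T.le v w → w = v

/-- `w` is an immediate successor of `v`. -/
def ImSucc (v w : Fin T.card) : Prop :=
  T.le v w ∧ v ≠ w ∧ ∀ u, T.le v u → T.le u w → u = v ∨ u = w

/-- The number of immediate successors of a node. -/
def imCard (v : Fin T.card) : ℕ := (Finset.univ.filter (fun w => T.ImSucc v w)).card

/-- The branching number `br(T)`: maximal number of immediate successors of a node. -/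
def br : ℕ := Finset.univ.sup (fun v => T.imCard v)

/-- The height of a node: the number of its predecessors (itself included). -/
def ht (v : Fin T.card) : ℕ := (Finset.univ.filter (fun u => T.le u v)).card

/-- The height of the tree. -/
def height : ℕ := Finset.univ.sup (fun v => T.ht v)

end OTree

/-- `f` is an embedding of ordered trees: an injective meet-morphism preserving
the lexicographic order, such that for every `v`, those immediate successors of `f v`
lying below an image of an immediate successor of `v` form a lex-initial segment
of the immediate successors of `f v`. -/
def IsEmb (S T : OTree) (f : Fin S.card → Fin T.card) : Prop :=
  Function.Injective f ∧
  (∀ v w, f (S.meet v w) = T.meet (f v) (f w)) ∧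
  (∀ v w, S.lex v w → T.lex (f v) (f w)) ∧
  (∀ v w₁ w₂, T.ImSucc (f v) w₁ → T.ImSucc (f v) w₂ → T.lex w₁ w₂ →
    (∃ v', S.ImSucc v v' ∧ T.le w₂ (f v')) → ∃ v', S.ImSucc v v' ∧ T.le w₁ (f v'))

/-- `f` maps leaves to leaves. -/
def LeafPres (S T : OTree) (f : Fin S.card → Fin T.card) : Prop :=
  ∀ v, S.Leaf v → T.Leaf (f v)

/-- `f` is strong: it maps nodes of equal height to nodes of equal height. -/
def Strong (S T : OTree) (f : Fin S.card → Fin T.card) : Prop :=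
  ∀ v w, S.ht v = S.ht w → T.ht (f v) = T.ht (f w)

/-- The linear (chain) ordered tree with `s` nodes, i.e. `[s] = {1,…,s}`. -/
def chainTree (s : ℕ) : OTree where
  card := s
  le := (· ≤ ·)
  le_refl := fun v => le_refl v
  le_antisymm := fun v w h1 h2 => le_antisymm h1 h2
  le_trans := fun u v w h1 h2 => le_trans h1 h2
  pred_linear := fun _ u w _ _ => le_total u w
  meet_exists := fun v w =>
    ⟨min v w, min_le_left v w, min_le_right v w, fun z h1 h2 => le_min h1 h2⟩
  lex := (· ≤ ·)
  lex_total := fun v w => le_total v w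
  lex_antisymm := fun v w h1 h2 => le_antisymm h1 h2
  lex_trans := fun u v w h1 h2 => le_trans h1 h2
  le_lex := fun _ _ h => h
  lex_compat := fun v w _ _ h1 h2 _ _ _ => absurd (le_total v w) (by tauto)

/-- `T` is the regular tree with branching number `k` and height `n`: every non-leaf
node has exactly `k` immediate successors and every leaf has height `n`. -/
def Regular (T : OTree) (k n : ℕ) : Prop :=
  (∀ v, ¬ T.Leaf v → T.imCard v = k) ∧ (∀ v, T.Leaf v → T.ht v = n) ∧ (T.card = 0 ↔ n = 0)

end

noncomputable section
open scoped Classical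
open Finset

namespace OTree

variable {T : OTree}

lemma lex_refl (v : Fin T.card) : T.lex v v := (T.lex_total v v).elim id id

lemma meet_le_left (v w : Fin T.card) : T.le (T.meet v w) v :=
  (Classical.choose_spec (T.meet_exists v w)).1

lemma meet_le_right (v w : Fin T.card) : T.le (T.meet v w) w :=
  (Classical.choose_spec (T.meet_exists v w)).2.1

lemma le_meet {v w z : Fin T.card} (h1 : T.le z v) (h2 : T.le z w) : T.le z (T.meet v w) :=
  (Classical.choose_spec (T.meet_exists v w)).2.2 z h1 h2

lemma meet_eq {u v w : Fin T.card} (h1 : T.le u v) (h2 : T.le u w)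
    (h3 : ∀ z, T.le z v → T.le z w → T.le z u) : T.meet v w = u :=
  T.le_antisymm _ _ (h3 _ (meet_le_left v w) (meet_le_right v w)) (le_meet h1 h2)

lemma meet_self (v : Fin T.card) : T.meet v v = v :=
  meet_eq (T.le_refl v) (T.le_refl v) (fun _ h _ => h)

lemma meet_eq_left {v w : Fin T.card} (h : T.le v w) : T.meet v w = v :=
  meet_eq (T.le_refl v) h (fun _ hz _ => hz)

lemma ht_pos (v : Fin T.card) : 1 ≤ T.ht v := by
  have : v ∈ Finset.univ.filter (fun u => T.le u v) := by
    simp [T.le_refl v]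
  have := Finset.card_pos.2 ⟨v, this⟩
  simpa [OTree.ht] using this

lemma ht_le_of_le {u v : Fin T.card} (h : T.le u v) : T.ht u ≤ T.ht v := by
  apply Finset.card_le_card
  intro z hz
  simp only [Finset.mem_filter, Finset.mem_univ, true_and] at hz ⊢
  exact T.le_trans _ _ _ hz h

lemma ht_lt_of_lt {u v : Fin T.card} (h : T.le u v) (hne : u ≠ v) : T.ht u < T.ht v := by
  apply Finset.card_lt_card
  constructor
  · intro z hz
    simp only [Finset.mem_filter, Finset.mem_univ, true_and] at hz ⊢
    exact T.le_trans _ _ _ hz h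
  · intro hsub
    have := hsub (by simp [T.le_refl v] : v ∈ Finset.univ.filter (fun u => T.le u v))
    simp only [Finset.mem_filter, Finset.mem_univ, true_and] at this
    exact hne (T.le_antisymm _ _ this h).symm

lemma eq_of_le_of_ht_le {u v : Fin T.card} (h : T.le u v) (hh : T.ht v ≤ T.ht u) : u = v := by
  by_contra hne
  exact absurd hh (not_le.2 (ht_lt_of_lt h hne))

lemma le_of_both_le {u w x : Fin T.card} (hu : T.le u x) (hw : T.le w x)
    (h : T.ht u ≤ T.ht w) : T.le u w := by
  rcases T.pred_linear x u w hu hw with h1 | h1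
  · exact h1
  · rcases eq_of_le_of_ht_le h1 h with rfl; exact T.le_refl _

lemma exists_anc {v : Fin T.card} {m : ℕ} (h1 : 1 ≤ m) (h2 : m ≤ T.ht v) :
    ∃ u, T.le u v ∧ T.ht u = m := by
  classical
  set A : Finset (Fin T.card) := Finset.univ.filter (fun u => T.le u v) with hA
  have hcard : A.card = T.ht v := rfl
  have hinj : Set.InjOn T.ht A := by
    intro a ha b hb hab
    simp only [hA, Finset.coe_filter, Set.mem_setOf_eq, Finset.mem_univ, true_and] at ha hb
    rcases T.pred_linear v a b ha hb with h | h
    · exact eq_of_le_of_ht_le h hab.ge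
    · exact (eq_of_le_of_ht_le h hab.le).symm
  have hsub : A.image T.ht ⊆ Finset.Icc 1 (T.ht v) := by
    intro m hm
    simp only [Finset.mem_image] at hm
    rcases hm with ⟨a, ha, rfl⟩
    simp only [hA, Finset.mem_filter, Finset.mem_univ, true_and] at ha
    exact Finset.mem_Icc.2 ⟨ht_pos a, ht_le_of_le ha⟩
  have hcard2 : (A.image T.ht).card = A.card := Finset.card_image_of_injOn hinj
  have : A.image T.ht = Finset.Icc 1 (T.ht v) := by
    apply Finset.eq_of_subset_of_card_le hsub
    simp [hcard2, hcard]
  have hm : m ∈ A.image T.ht := by rw [this]; exact Finset.mem_Icc.2 ⟨h1, h2⟩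
  rcases Finset.mem_image.1 hm with ⟨a, ha, rfl⟩
  simp only [hA, Finset.mem_filter, Finset.mem_univ, true_and] at ha
  exact ⟨a, ha, rfl⟩

/-- the ancestor of `v` at height `m` (junk `v` if out of range). -/
noncomputable def anc (T : OTree) (v : Fin T.card) (m : ℕ) : Fin T.card :=
  if h : 1 ≤ m ∧ m ≤ T.ht v then Classical.choose (exists_anc h.1 h.2) else v

lemma anc_le (v : Fin T.card) (m : ℕ) : T.le (T.anc v m) v := by
  unfold anc
  split
  · next h => exact (Classical.choose_spec (exists_anc h.1 h.2)).1
  · exact T.le_refl v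

lemma ht_anc {v : Fin T.card} {m : ℕ} (h1 : 1 ≤ m) (h2 : m ≤ T.ht v) :
    T.ht (T.anc v m) = m := by
  unfold anc
  rw [dif_pos ⟨h1, h2⟩]
  exact (Classical.choose_spec (exists_anc h1 h2)).2

lemma anc_unique {v u : Fin T.card} {m : ℕ} (hu : T.le u v) (hm : T.ht u = m) :
    T.anc v m = u := by
  have h1 : 1 ≤ m := hm ▸ ht_pos u
  have h2 : m ≤ T.ht v := hm ▸ ht_le_of_le hu
  have hle := anc_le (T := T) v m
  have hht := ht_anc (T := T) (v := v) h1 h2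
  rcases T.pred_linear v _ _ hle hu with h | h
  · exact eq_of_le_of_ht_le h (by omega)
  · exact (eq_of_le_of_ht_le h (by omega)).symm

lemma anc_self (v : Fin T.card) : T.anc v (T.ht v) = v :=
  anc_unique (T.le_refl v) rfl

lemma anc_le_anc {v : Fin T.card} {m m' : ℕ} (h0 : 1 ≤ m) (h1 : m ≤ m') (h2 : m' ≤ T.ht v) :
    T.le (T.anc v m) (T.anc v m') :=
  le_of_both_le (anc_le v m) (anc_le v m')
    (by rw [ht_anc h0 (Nat.le_trans h1 h2), ht_anc (Nat.le_trans h0 h1) h2]; exact h1)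

lemma anc_of_le {u v : Fin T.card} {m : ℕ} (huv : T.le u v) (h1 : 1 ≤ m) (h2 : m ≤ T.ht u) :
    T.anc v m = T.anc u m :=
  anc_unique (T.le_trans _ _ _ (anc_le u m) huv) (ht_anc h1 h2)

lemma imSucc_iff {v w : Fin T.card} :
    T.ImSucc v w ↔ T.le v w ∧ T.ht w = T.ht v + 1 := by
  constructor
  · rintro ⟨hle, hne, hmax⟩
    refine ⟨hle, ?_⟩
    have hlt : T.ht v < T.ht w := ht_lt_of_lt hle hne
    by_contra hne2
    have h2 : T.ht v + 1 ≤ T.ht w := hlt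
    have h3 : T.ht v + 1 < T.ht w := by omega
    obtain ⟨u, huw, hu⟩ := exists_anc (v := w) (m := T.ht v + 1) (by omega) (by omega)
    have hvu : T.le v u := le_of_both_le hle huw (by omega)
    rcases hmax u hvu huw with rfl | rfl
    · omega
    · omega
  · rintro ⟨hle, hht⟩
    refine ⟨hle, ?_, ?_⟩
    · rintro rfl; omega
    · intro u hvu huw
      have h1 : T.ht v ≤ T.ht u := ht_le_of_le hvu
      have h2 : T.ht u ≤ T.ht w := ht_le_of_le huw
      rcases (by omega : T.ht u = T.ht v ∨ T.ht u = T.ht w) with h | h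
      · exact Or.inl ((eq_of_le_of_ht_le hvu (by omega)).symm)
      · exact Or.inr (eq_of_le_of_ht_le huw (by omega))

end OTree
namespace OTree

variable {T : OTree}

lemma exists_leaf_above (v : Fin T.card) : ∃ m, T.le v m ∧ T.Leaf m := by
  classical
  set A : Finset (Fin T.card) := Finset.univ.filter (fun u => T.le v u) with hA
  have hne : A.Nonempty := ⟨v, by simp [hA, T.le_refl v]⟩
  obtain ⟨m, hm, hmax⟩ := Finset.exists_max_image A T.ht hne
  simp only [hA, Finset.mem_filter, Finset.mem_univ, true_and] at hm
  refine ⟨m, hm, ?_⟩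
  intro w hw
  have hwA : w ∈ A := by
    simp only [hA, Finset.mem_filter, Finset.mem_univ, true_and]
    exact T.le_trans _ _ _ hm hw
  exact (eq_of_le_of_ht_le hw (hmax w hwA)).symm

/-- the immediate successors of `v` as a finset. -/
def childSet (T : OTree) (v : Fin T.card) : Finset (Fin T.card) :=
  Finset.univ.filter (fun w => T.ImSucc v w)

lemma card_childSet (v : Fin T.card) : (T.childSet v).card = T.imCard v := rfl

instance lexTrans (T : OTree) : IsTrans (Fin T.card) T.lex := ⟨T.lex_trans⟩
instance lexAntisymm (T : OTree) : IsAntisymm (Fin T.card) T.lex := ⟨T.lex_antisymm⟩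
instance lexTotalI (T : OTree) : IsTotal (Fin T.card) T.lex := ⟨T.lex_total⟩

/-- the children of `v`, listed in lexicographic order. -/
noncomputable def childList (T : OTree) (v : Fin T.card) : List (Fin T.card) :=
  (T.childSet v).sort T.lex

lemma mem_childList {v w : Fin T.card} : w ∈ T.childList v ↔ T.ImSucc v w := by
  simp [childList, Finset.mem_sort, childSet]

lemma length_childList (v : Fin T.card) : (T.childList v).length = T.imCard v := by
  simp [childList, Finset.length_sort, card_childSet]

/-- the `j`-th child of `v` in lexicographic order (junk `v` out of range). -/
noncomputable def nthChild (T : OTree) (v : Fin T.card) (j : ℕ) : Fin T.card :=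
  (T.childList v).getD j v

lemma nthChild_imSucc {v : Fin T.card} {j : ℕ} (hj : j < T.imCard v) :
    T.ImSucc v (T.nthChild v j) := by
  have hlen : j < (T.childList v).length := by rwa [length_childList]
  rw [← mem_childList (T := T) (v := v)]
  unfold nthChild
  rw [List.getD_eq_get _ _ ⟨_, hlen⟩]
  exact List.get_mem _ _

lemma nthChild_lex {v : Fin T.card} {j j' : ℕ} (hjj : j < j') (hj' : j' < T.imCard v) :
    T.lex (T.nthChild v j) (T.nthChild v j') ∧ T.nthChild v j ≠ T.nthChild v j' := by
  have hlen' : j' < (T.childList v).length := by rwa [length_childList]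
  have hlen : j < (T.childList v).length := by omega
  have hsort : (T.childList v).Pairwise T.lex := Finset.pairwise_sort _ _
  have hnodup : (T.childList v).Nodup := Finset.sort_nodup _ _
  unfold nthChild
  rw [List.getD_eq_get _ _ ⟨_, hlen⟩, List.getD_eq_get _ _ ⟨_, hlen'⟩]
  constructor
  · exact List.Pairwise.rel_get_of_lt hsort (by simpa using hjj)
  · intro h
    have := (List.nodup_iff_injective_get.1 hnodup) h
    simp only [Fin.mk.injEq] at this
    omega

lemma exists_child_index {v w : Fin T.card} (h : T.ImSucc v w) :
    ∃ j, j < T.imCard v ∧ T.nthChild v j = w := by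
  have hmem : w ∈ T.childList v := mem_childList.2 h
  obtain ⟨⟨j, hj⟩, hget⟩ := List.get_of_mem hmem
  refine ⟨j, by rwa [length_childList] at hj, ?_⟩
  unfold nthChild
  rw [List.getD_eq_get _ _ ⟨_, hj⟩]
  exact hget

/-- the position of `w` in the lex-ordered list of children of `v`. -/
noncomputable def slotIdx (T : OTree) (v w : Fin T.card) : ℕ :=
  (T.childList v).idxOf w

lemma slotIdx_lt {v w : Fin T.card} (h : T.ImSucc v w) : T.slotIdx v w < T.imCard v := by
  rw [← length_childList]
  exact List.idxOf_lt_length_iff.2 (mem_childList.2 h)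

lemma nthChild_slotIdx {v w : Fin T.card} (h : T.ImSucc v w) :
    T.nthChild v (T.slotIdx v w) = w := by
  have hmem : w ∈ T.childList v := mem_childList.2 h
  have hlen := List.idxOf_lt_length_iff.2 hmem
  unfold nthChild slotIdx
  rw [List.getD_eq_get _ _ ⟨_, hlen⟩]
  exact List.idxOf_get hlen

lemma slotIdx_nthChild {v : Fin T.card} {j : ℕ} (hj : j < T.imCard v) :
    T.slotIdx v (T.nthChild v j) = j := by
  have hlen : j < (T.childList v).length := by rwa [length_childList]
  have hnodup : (T.childList v).Nodup := Finset.sort_nodup _ _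
  unfold slotIdx nthChild
  rw [List.getD_eq_get _ _ ⟨_, hlen⟩]
  exact List.get_idxOf hnodup _

/-- the parent of `v` (junk `v` for the root). -/
noncomputable def parent (T : OTree) (v : Fin T.card) : Fin T.card :=
  T.anc v (T.ht v - 1)

lemma ht_parent {v : Fin T.card} (h : 2 ≤ T.ht v) : T.ht (T.parent v) = T.ht v - 1 :=
  ht_anc (by omega) (by omega)

lemma parent_imSucc {v : Fin T.card} (h : 2 ≤ T.ht v) : T.ImSucc (T.parent v) v := by
  rw [imSucc_iff]
  refine ⟨anc_le v _, ?_⟩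
  rw [ht_parent h]; omega

lemma parent_of_imSucc {v w : Fin T.card} (h : T.ImSucc v w) : T.parent w = v := by
  rw [imSucc_iff] at h
  exact anc_unique h.1 (by omega)

lemma ht_nthChild {v : Fin T.card} {j : ℕ} (hj : j < T.imCard v) :
    T.ht (T.nthChild v j) = T.ht v + 1 := (imSucc_iff.1 (nthChild_imSucc hj)).2

/-- key "divergence" fact: common lower bounds of nodes lying above distinct
children of `p` lie below `p`. -/
lemma le_of_le_distinct_children {p c c' d d' z : Fin T.card}
    (hc : T.ImSucc p c) (hc' : T.ImSucc p c') (hne : c ≠ c')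
    (hd : T.le c d) (hd' : T.le c' d') (hz : T.le z d) (hz' : T.le z d') : T.le z p := by
  have hpc := (imSucc_iff.1 hc)
  have hpc' := (imSucc_iff.1 hc')
  have hpd : T.le p d := T.le_trans _ _ _ hpc.1 hd
  rcases T.pred_linear d z p hz hpd with h | h
  · exact h
  · -- p ≤ z
    by_cases hzp : z = p
    · rcases hzp; exact T.le_refl _
    have hht : T.ht p + 1 ≤ T.ht z := ht_lt_of_lt h (Ne.symm hzp)
    have h1 : T.anc z (T.ht p + 1) = T.anc d (T.ht p + 1) := (anc_of_le hz (by omega) (by omega)).symm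
    have h2 : T.anc z (T.ht p + 1) = T.anc d' (T.ht p + 1) := (anc_of_le hz' (by omega) (by omega)).symm
    have h3 : T.anc d (T.ht p + 1) = c := anc_unique hd hpc.2
    have h4 : T.anc d' (T.ht p + 1) = c' := anc_unique hd' hpc'.2
    exact absurd (h3 ▸ h4 ▸ h1.symm.trans h2) hne

lemma meet_siblings {p c c' : Fin T.card} (hc : T.ImSucc p c) (hc' : T.ImSucc p c')
    (hne : c ≠ c') : T.meet c c' = p :=
  meet_eq (imSucc_iff.1 hc).1 (imSucc_iff.1 hc').1
    (fun z hz hz' => le_of_le_distinct_children hc hc' hne (T.le_refl c) (T.le_refl c') hz hz')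

/-- reflecting `lex` to incomparable lower bounds. -/
lemma lex_reflect {a b a' b' : Fin T.card} (ha : T.le a a') (hb : T.le b b')
    (hab : ¬ T.le a b) (hba : ¬ T.le b a) (h : T.lex a' b') : T.lex a b := by
  rcases T.lex_total a b with h1 | h1
  · exact h1
  · exfalso
    have := T.lex_compat b a b' a' hba hab h1 hb ha
    have heq := T.lex_antisymm _ _ h this
    -- a' = b'
    subst heq
    rcases T.pred_linear a' a b ha hb with h2 | h2 <;> [exact hab h2; exact hba h2]

end OTree
namespace OTree

variable {T : OTree} {k n : ℕ}

lemma ht_le_height (hreg : Regular T k n) (v : Fin T.card) : T.ht v ≤ n := by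
  obtain ⟨m, hvm, hleaf⟩ := exists_leaf_above v
  have := hreg.2.1 m hleaf
  calc T.ht v ≤ T.ht m := ht_le_of_le hvm
    _ = n := this

lemma leaf_iff_ht (hreg : Regular T k n) {v : Fin T.card} : T.Leaf v ↔ T.ht v = n := by
  constructor
  · exact hreg.2.1 v
  · intro h
    obtain ⟨m, hvm, hleaf⟩ := exists_leaf_above v
    have hm := hreg.2.1 m hleaf
    have : v = m := eq_of_le_of_ht_le hvm (by omega)
    rwa [this]

lemma not_leaf_of_ht_lt (hreg : Regular T k n) {v : Fin T.card} (h : T.ht v < n) :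
    ¬ T.Leaf v := fun hl => by rw [leaf_iff_ht hreg] at hl; omega

lemma imCard_eq (hreg : Regular T k n) {v : Fin T.card} (h : T.ht v < n) :
    T.imCard v = k := hreg.1 v (not_leaf_of_ht_lt hreg h)

/-- some descendant of `v` at height `m`. -/
noncomputable def desc (T : OTree) (v : Fin T.card) (m : ℕ) : Fin T.card :=
  T.anc (Classical.choose (exists_leaf_above v)) m

lemma le_desc (hreg : Regular T k n) {v : Fin T.card} {m : ℕ} (h1 : T.ht v ≤ m) (h2 : m ≤ n) :
    T.le v (T.desc v m) := by
  obtain ⟨hvm, hleaf⟩ := Classical.choose_spec (exists_leaf_above v)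
  set w := Classical.choose (exists_leaf_above v)
  have hw : T.ht w = n := hreg.2.1 _ hleaf
  have h3 : T.anc w (T.ht v) = v := anc_unique hvm rfl
  unfold desc
  calc T.le v (T.anc w m) := h3 ▸ anc_le_anc (ht_pos v) h1 (by omega)

lemma ht_desc (hreg : Regular T k n) {v : Fin T.card} {m : ℕ} (h1 : T.ht v ≤ m) (h2 : m ≤ n) :
    T.ht (T.desc v m) = m := by
  obtain ⟨hvm, hleaf⟩ := Classical.choose_spec (exists_leaf_above v)
  have hw : T.ht (Classical.choose (exists_leaf_above v)) = n := hreg.2.1 _ hleaf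
  exact ht_anc (Nat.le_trans (ht_pos v) h1) (by omega)

lemma desc_self (hreg : Regular T k n) {v : Fin T.card} :
    T.desc v (T.ht v) = v :=
  eq_of_le_of_ht_le (le_desc hreg le_rfl (ht_le_height hreg v)) (by
    rw [ht_desc hreg le_rfl (ht_le_height hreg v)]) |>.symm

lemma ht_one_unique {v w : Fin T.card} (hv : T.ht v = 1) (hw : T.ht w = 1) : v = w := by
  have h1 : T.le (T.meet v w) v := meet_le_left v w
  have h2 : T.le (T.meet v w) w := meet_le_right v w
  have h3 := ht_pos (T := T) (T.meet v w)
  have e1 : T.meet v w = v := eq_of_le_of_ht_le h1 (by omega)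
  have e2 : T.meet v w = w := eq_of_le_of_ht_le h2 (by omega)
  rw [← e1, e2]

end OTree
namespace OTree

variable {S T : OTree}

lemma divergence {u w : Fin S.card} (h1 : ¬ S.le u w) (h2 : ¬ S.le w u) :
    ∃ d c c', S.meet u w = d ∧ S.ImSucc d c ∧ S.ImSucc d c' ∧ c ≠ c' ∧ S.le c u ∧ S.le c' w := by
  set d := S.meet u w with hd
  have hdu : S.le d u := meet_le_left u w
  have hdw : S.le d w := meet_le_right u w
  have hdnu : d ≠ u := fun h => h1 (h ▸ hdw)
  have hdnw : d ≠ w := fun h => h2 (h ▸ hdu)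
  have hhu : S.ht d < S.ht u := ht_lt_of_lt hdu hdnu
  have hhw : S.ht d < S.ht w := ht_lt_of_lt hdw hdnw
  set c := S.anc u (S.ht d + 1) with hc
  set c' := S.anc w (S.ht d + 1) with hc'
  have hcu : S.le c u := anc_le u _
  have hcw : S.le c' w := anc_le w _
  have hhc : S.ht c = S.ht d + 1 := ht_anc (by omega) (by omega)
  have hhc' : S.ht c' = S.ht d + 1 := ht_anc (by omega) (by omega)
  have hdc : S.ImSucc d c := imSucc_iff.2 ⟨le_of_both_le hdu hcu (by omega), by omega⟩
  have hdc' : S.ImSucc d c' := imSucc_iff.2 ⟨le_of_both_le hdw hcw (by omega), by omega⟩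
  refine ⟨d, c, c', rfl, hdc, hdc', ?_, hcu, hcw⟩
  intro h
  have : S.le c d := le_meet hcu (h ▸ hcw)
  have := ht_le_of_le this
  omega

section Key

variable {G : Fin S.card → Fin T.card}
variable (ha : ∀ v w : Fin S.card, S.ht v < S.ht w → T.ht (G v) < T.ht (G w))
variable (ha' : ∀ v w : Fin S.card, S.ht v = S.ht w → T.ht (G v) = T.ht (G w))
variable (hb : ∀ p w : Fin S.card, S.ImSucc p w → T.le (G p) (G w))
variable (hc : ∀ p w w' : Fin S.card, ∀ z : Fin T.card, S.ImSucc p w → S.ImSucc p w' →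
    w ≠ w' → T.le z (G w) → T.le z (G w') → T.le z (G p))

include hb in
lemma key_mono : ∀ u w : Fin S.card, S.le u w → T.le (G u) (G w) := by
  have H : ∀ m : ℕ, ∀ w u : Fin S.card, S.ht w ≤ m → S.le u w → T.le (G u) (G w) := by
    intro m
    induction m with
    | zero => intro w u hm _; have := ht_pos (T := S) w; omega
    | succ m ih =>
      intro w u hm hle
      by_cases heq : u = w
      · subst heq; exact T.le_refl _
      · have hlt : S.ht u < S.ht w := ht_lt_of_lt hle heq
        have h2 : 2 ≤ S.ht w := by have := ht_pos (T := S) u; omega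
        have hp := parent_imSucc h2
        have hup : S.le u (S.parent w) :=
          le_of_both_le hle (anc_le w _) (by rw [ht_parent h2]; omega)
        have := ih (S.parent w) u (by rw [ht_parent h2]; omega) hup
        exact T.le_trans _ _ _ this (hb _ _ hp)
  exact fun u w hle => H (S.ht w) w u le_rfl hle

include ha hc in
lemma key_not_le {d c c' : Fin S.card} (hdc : S.ImSucc d c) (hdc' : S.ImSucc d c')
    (hne : c ≠ c') : ¬ T.le (G c) (G c') := by
  intro h
  have := hc d c c' (G c) hdc hdc' hne (T.le_refl _) h
  have h2 := ht_le_of_le this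
  have h3 := ha d c (by rw [(imSucc_iff.1 hdc).2]; omega)
  omega

include ha ha' hb hc in
lemma key_inj : Function.Injective G := by
  intro u w heq
  by_contra hne
  by_cases hcomp : S.le u w ∨ S.le w u
  · rcases hcomp with h | h
    · have := ha u w (ht_lt_of_lt h hne); rw [heq] at this; omega
    · have := ha w u (ht_lt_of_lt h (Ne.symm hne)); rw [heq] at this; omega
  push_neg at hcomp
  obtain ⟨d, c, c', _, hdc, hdc', hcne, hcu, hcw⟩ := divergence hcomp.1 hcomp.2
  have h1 : T.le (G c) (G u) := key_mono hb _ _ hcu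
  have h2 : T.le (G c') (G u) := heq ▸ key_mono hb _ _ hcw
  have hcc : G c = G c' := by
    rcases T.pred_linear (G u) _ _ h1 h2 with h | h
    · exact eq_of_le_of_ht_le h
        (le_of_eq (ha' c' c (by rw [(imSucc_iff.1 hdc).2, (imSucc_iff.1 hdc').2])))
    · exact (eq_of_le_of_ht_le h
        (le_of_eq (ha' c c' (by rw [(imSucc_iff.1 hdc).2, (imSucc_iff.1 hdc').2])))).symm
  exact key_not_le ha hc hdc hdc' hcne (hcc ▸ T.le_refl _)

include ha ha' hb hc in
lemma key_meet : ∀ u w : Fin S.card, G (S.meet u w) = T.meet (G u) (G w) := by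
  intro u w
  by_cases hcomp : S.le u w ∨ S.le w u
  · rcases hcomp with h | h
    · rw [meet_eq_left h, meet_eq_left (key_mono hb _ _ h)]
    · rw [show S.meet u w = w from
        meet_eq h (S.le_refl w) (fun z _ hz => hz),
        show T.meet (G u) (G w) = G w from
        meet_eq (key_mono hb _ _ h) (T.le_refl _) (fun z _ hz => hz)]
  push_neg at hcomp
  obtain ⟨d, c, c', hmeet, hdc, hdc', hcne, hcu, hcw⟩ := divergence hcomp.1 hcomp.2
  rw [hmeet]
  symm
  apply meet_eq (key_mono hb _ _ (S.le_trans _ _ _ (imSucc_iff.1 hdc).1 hcu))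
    (key_mono hb _ _ (S.le_trans _ _ _ (imSucc_iff.1 hdc').1 hcw))
  intro z hzu hzw
  have hGc : T.le (G c) (G u) := key_mono hb _ _ hcu
  have hGc' : T.le (G c') (G w) := key_mono hb _ _ hcw
  rcases T.pred_linear (G u) z (G c) hzu hGc with h1 | h1
  · -- z ≤ G c
    rcases T.pred_linear (G w) z (G c') hzw hGc' with h2 | h2
    · exact hc d c c' z hdc hdc' hcne h1 h2
    · -- G c' ≤ z ≤ G c
      exact absurd (T.le_trans _ _ _ h2 h1) (key_not_le ha hc hdc' hdc (Ne.symm hcne))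
  · -- G c ≤ z, so G c ≤ G w
    have h3 : T.le (G c) (G w) := T.le_trans _ _ _ h1 hzw
    rcases T.pred_linear (G w) _ _ h3 hGc' with h4 | h4
    · exact absurd h4 (key_not_le ha hc hdc hdc' hcne)
    · exact absurd h4 (key_not_le ha hc hdc' hdc (Ne.symm hcne))

variable (hd : ∀ p w w' : Fin S.card, S.ImSucc p w → S.ImSucc p w' → w ≠ w' →
    S.lex w w' → T.lex (G w) (G w'))

include ha ha' hb hc hd in
lemma key_lex : ∀ u w : Fin S.card, S.lex u w → T.lex (G u) (G w) := by
  intro u w hlex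
  by_cases heq : u = w
  · subst heq; exact lex_refl _
  by_cases hcomp : S.le u w ∨ S.le w u
  · rcases hcomp with h | h
    · exact T.le_lex _ _ (key_mono hb _ _ h)
    · exact absurd (S.lex_antisymm _ _ hlex (S.le_lex _ _ h)) heq
  push_neg at hcomp
  obtain ⟨d, c, c', _, hdc, hdc', hcne, hcu, hcw⟩ := divergence hcomp.1 hcomp.2
  have hclex : S.lex c c' := by
    rcases S.lex_total c c' with h | h
    · exact h
    · exfalso
      have hinc : ¬ S.le c' c := by
        intro hle
        have h1 := (imSucc_iff.1 hdc).2
        have h2 := (imSucc_iff.1 hdc').2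
        exact hcne (eq_of_le_of_ht_le hle (by omega)).symm
      have hinc' : ¬ S.le c c' := by
        intro hle
        have h1 := (imSucc_iff.1 hdc).2
        have h2 := (imSucc_iff.1 hdc').2
        exact hcne (eq_of_le_of_ht_le hle (by omega))
      have := S.lex_compat c' c w u hinc hinc' h hcw hcu
      exact heq (S.lex_antisymm _ _ hlex this)
  have hG := hd d c c' hdc hdc' hcne hclex
  exact T.lex_compat _ _ _ _ (key_not_le ha hc hdc hdc' hcne)
    (key_not_le ha hc hdc' hdc (Ne.symm hcne)) hG
    (key_mono hb _ _ hcu) (key_mono hb _ _ hcw)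

end Key

end OTree
namespace OTree

lemma mono_of_meet {S T : OTree} {f : Fin S.card → Fin T.card}
    (hmeet : ∀ v w, f (S.meet v w) = T.meet (f v) (f w)) :
    ∀ a b : Fin S.card, S.le a b → T.le (f a) (f b) := by
  intro a b h
  have h2 := hmeet a b
  rw [meet_eq_left h] at h2
  rw [h2]
  exact meet_le_right _ _

/-- the fourth (initial-segment) condition of `IsEmb` is automatic for injective
meet-morphisms between regular trees of the same branching number. -/
lemma cond4 {S T : OTree} {kk nS nT : ℕ} (hS : Regular S kk nS) (hT : Regular T kk nT)
    {f : Fin S.card → Fin T.card} (hinj : Function.Injective f)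
    (hmeet : ∀ v w, f (S.meet v w) = T.meet (f v) (f w)) :
    ∀ v w₁ w₂, T.ImSucc (f v) w₁ → T.ImSucc (f v) w₂ → T.lex w₁ w₂ →
      (∃ v', S.ImSucc v v' ∧ T.le w₂ (f v')) → ∃ v', S.ImSucc v v' ∧ T.le w₁ (f v') := by
  rintro v w₁ w₂ h1 _ _ ⟨u, hu, _⟩
  have hmono := mono_of_meet hmeet
  have hstrict : ∀ a b : Fin S.card, S.ImSucc a b → T.ht (f a) < T.ht (f b) := by
    intro a b hab
    exact ht_lt_of_lt (hmono _ _ hab.1) (fun h => hab.2.1 (hinj h))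
  -- v is not a leaf
  have hvnl : ¬ S.Leaf v := fun hl => hu.2.1 (hl _ hu.1).symm
  have hfvnl : ¬ T.Leaf (f v) := by
    intro hl
    have := hl _ (hmono _ _ hu.1)
    exact hu.2.1 (hinj this).symm
  have hcards : (S.childSet v).card = kk := hS.1 v hvnl
  have hcardt : (T.childSet (f v)).card = kk := hT.1 (f v) hfvnl
  -- the map from children of v to children of f v
  set e : Fin S.card → Fin T.card := fun c => T.anc (f c) (T.ht (f v) + 1) with he
  have hmem : ∀ c ∈ S.childSet v, e c ∈ T.childSet (f v) := by
    intro c hcm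
    simp only [childSet, Finset.mem_filter, Finset.mem_univ, true_and] at hcm ⊢
    have hht : T.ht (f v) + 1 ≤ T.ht (f c) := hstrict _ _ hcm
    have h3 : T.ht (e c) = T.ht (f v) + 1 := ht_anc (by omega) hht
    refine imSucc_iff.2 ⟨?_, h3⟩
    exact le_of_both_le (hmono _ _ hcm.1) (anc_le _ _) (by omega)
  have hle : ∀ c, c ∈ S.childSet v → T.le (e c) (f c) := fun c _ => anc_le _ _
  have hinje : ∀ (c c' : Fin S.card), c ∈ S.childSet v → c' ∈ S.childSet v →
      e c = e c' → c = c' := by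
    intro c c' hcm hcm' hee
    by_contra hne
    simp only [childSet, Finset.mem_filter, Finset.mem_univ, true_and] at hcm hcm'
    have h1 : T.le (e c) (T.meet (f c) (f c')) :=
      le_meet (anc_le _ _) (hee ▸ anc_le _ _)
    rw [← hmeet, meet_siblings hcm hcm' hne] at h1
    have h2 := ht_le_of_le h1
    have hht : T.ht (f v) + 1 ≤ T.ht (f c) := hstrict _ _ hcm
    rw [ht_anc (by omega) hht] at h2
    omega
  obtain ⟨c, hcm, hec⟩ := Finset.surj_on_of_inj_on_of_card_le (fun c _ => e c)
    hmem hinje (by omega) w₁ (by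
      simp only [childSet, Finset.mem_filter, Finset.mem_univ, true_and]; exact h1)
  simp only [childSet, Finset.mem_filter, Finset.mem_univ, true_and] at hcm
  exact ⟨c, hcm, hec ▸ hle c (by
    simp only [childSet, Finset.mem_filter, Finset.mem_univ, true_and]; exact hcm)⟩

lemma factor_through {A B C : OTree} {g : Fin A.card → Fin C.card} {G : Fin B.card → Fin C.card}
    (hgi : Function.Injective g) (hgm : ∀ v w, g (A.meet v w) = C.meet (g v) (g w))
    (hgl : ∀ v w, A.lex v w → C.lex (g v) (g w))
    (hGi : Function.Injective G) (hGm : ∀ v w, G (B.meet v w) = C.meet (G v) (G w))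
    (hGl : ∀ v w, B.lex v w → C.lex (G v) (G w))
    (hsurj : ∀ v, ∃ w, G w = g v) :
    ∃ g₁ : Fin A.card → Fin B.card, (∀ v, G (g₁ v) = g v) ∧ Function.Injective g₁ ∧
      (∀ v w, g₁ (A.meet v w) = B.meet (g₁ v) (g₁ w)) ∧
      (∀ v w, A.lex v w → B.lex (g₁ v) (g₁ w)) := by
  set g₁ : Fin A.card → Fin B.card := fun v => Classical.choose (hsurj v) with hg₁
  have hcomm : ∀ v, G (g₁ v) = g v := fun v => Classical.choose_spec (hsurj v)
  refine ⟨g₁, hcomm, ?_, ?_, ?_⟩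
  · intro a b h
    apply hgi
    rw [← hcomm, ← hcomm, h]
  · intro v w
    apply hGi
    rw [hcomm, hGm, hcomm, hcomm, hgm]
  · intro v w h
    rcases B.lex_total (g₁ v) (g₁ w) with h1 | h1
    · exact h1
    · have h2 := hGl _ _ h1
      rw [hcomm, hcomm] at h2
      have := C.lex_antisymm _ _ h2 (hgl _ _ h)
      have := hgi this
      rw [this]
      exact lex_refl _

end OTree
namespace OTree

/-- The extension construction: `(Ffun … w).1` is the value of the extended embedding
`T^{l+1} → T^n` at `w`, and `(Ffun … w).2` records the node of `T^l` (if any) whose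
`g`-image the subtree above `w` must cover. -/
noncomputable def Ffun (Tl Tl1 Tn : OTree) (g : Fin Tl.card → Fin Tn.card)
    (l i : ℕ) (h' : ℕ → ℕ) (rootl : Fin Tl.card) (w : Fin Tl1.card) :
    Fin Tn.card × Option (Fin Tl.card) :=
  if h1 : Tl1.ht w ≤ 1 then (Tn.anc (g rootl) (h' 1), some rootl)
  else
    match (Ffun Tl Tl1 Tn g l i h' rootl (Tl1.parent w)).2,
          (Ffun Tl Tl1 Tn g l i h' rootl (Tl1.parent w)).1 with
    | none, y => (Tn.desc (Tn.nthChild y (Tl1.slotIdx (Tl1.parent w) w)) (h' (Tl1.ht w)), none)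
    | some v, y =>
      if Tl1.ht (Tl1.parent w) = i then
        (Tn.desc (Tn.nthChild y (Tl1.slotIdx (Tl1.parent w) w)) (h' (Tl1.ht w)),
          if Tn.le (Tn.nthChild y (Tl1.slotIdx (Tl1.parent w) w)) (g v) then some v else none)
      else if Tl.ht v = l then
        (Tn.desc (Tn.nthChild y (Tl1.slotIdx (Tl1.parent w) w)) (h' (Tl1.ht w)), none)
      else
        (Tn.anc (g (Tl.nthChild v (Tl1.slotIdx (Tl1.parent w) w))) (h' (Tl1.ht w)),
          some (Tl.nthChild v (Tl1.slotIdx (Tl1.parent w) w)))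
termination_by Tl1.ht w
decreasing_by
  all_goals
    { rw [ht_parent (by omega : 2 ≤ Tl1.ht w)]; omega }

variable {Tl Tl1 Tn : OTree} {g : Fin Tl.card → Fin Tn.card}
    {l i : ℕ} {h' : ℕ → ℕ} {rootl : Fin Tl.card}

lemma Ffun_root {w : Fin Tl1.card} (h1 : Tl1.ht w = 1) :
    Ffun Tl Tl1 Tn g l i h' rootl w = (Tn.anc (g rootl) (h' 1), some rootl) := by
  rw [Ffun, dif_pos (by omega)]

lemma Ffun_child_none {p w : Fin Tl1.card} (hpw : Tl1.ImSucc p w)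
    (h2 : (Ffun Tl Tl1 Tn g l i h' rootl p).2 = none) :
    Ffun Tl Tl1 Tn g l i h' rootl w =
      (Tn.desc (Tn.nthChild (Ffun Tl Tl1 Tn g l i h' rootl p).1 (Tl1.slotIdx p w))
        (h' (Tl1.ht w)), none) := by
  have hh : 2 ≤ Tl1.ht w := by
    rw [(imSucc_iff.1 hpw).2]; have := ht_pos (T := Tl1) p; omega
  have hpar := parent_of_imSucc hpw
  rw [Ffun, dif_neg (by omega)]
  rw [hpar, h2]

lemma Ffun_child_some {p w : Fin Tl1.card} {v : Fin Tl.card} (hpw : Tl1.ImSucc p w)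
    (h2 : (Ffun Tl Tl1 Tn g l i h' rootl p).2 = some v) :
    Ffun Tl Tl1 Tn g l i h' rootl w =
      (if Tl1.ht p = i then
        (Tn.desc (Tn.nthChild (Ffun Tl Tl1 Tn g l i h' rootl p).1 (Tl1.slotIdx p w))
          (h' (Tl1.ht w)),
          if Tn.le (Tn.nthChild (Ffun Tl Tl1 Tn g l i h' rootl p).1 (Tl1.slotIdx p w)) (g v)
          then some v else none)
      else if Tl.ht v = l then
        (Tn.desc (Tn.nthChild (Ffun Tl Tl1 Tn g l i h' rootl p).1 (Tl1.slotIdx p w))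
          (h' (Tl1.ht w)), none)
      else
        (Tn.anc (g (Tl.nthChild v (Tl1.slotIdx p w))) (h' (Tl1.ht w)),
          some (Tl.nthChild v (Tl1.slotIdx p w)))) := by
  have hh : 2 ≤ Tl1.ht w := by
    rw [(imSucc_iff.1 hpw).2]; have := ht_pos (T := Tl1) p; omega
  have hpar := parent_of_imSucc hpw
  rw [Ffun, dif_neg (by omega)]
  rw [hpar, h2]

end OTree
namespace OTree

section Construction

variable {k l n : ℕ} {Tl Tl1 Tn : OTree} {g : Fin Tl.card → Fin Tn.card}
  {i : ℕ} {h h' : ℕ → ℕ} {rootl : Fin Tl.card}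

variable (hk : 1 ≤ k) (hl1 : 1 ≤ l)
  (hTl : Regular Tl k l) (hTl1 : Regular Tl1 k (l+1)) (hTn : Regular Tn k n)
  (hroot : Tl.ht rootl = 1)
  (hH : ∀ v, Tn.ht (g v) = h (Tl.ht v))
  (hi1 : 1 ≤ i) (hi2 : i ≤ l + 1)
  (hP1 : ∀ j, 1 ≤ j → j ≤ l + 1 → 1 ≤ h' j ∧ h' j ≤ n)
  (hP2 : ∀ j j', 1 ≤ j → j < j' → j' ≤ l + 1 → h' j < h' j')
  (hP3a : ∀ j, 1 ≤ j → j < i → h' j = h j)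
  (hP3b : ∀ j, i < j → j ≤ l + 1 → h' j = h (j - 1))
  (hP4 : i ≤ l → h' i + 1 = h i)

include hTl1 hTn hP1 hP2 in
/-- basic facts about the `desc`-shaped branch values. -/
lemma step_desc {p w : Fin Tl1.card} {y : Fin Tn.card} (hpw : Tl1.ImSucc p w)
    (hp1 : Tn.ht y = h' (Tl1.ht p)) :
    Tl1.slotIdx p w < Tn.imCard y ∧
    Tn.ht (Tn.nthChild y (Tl1.slotIdx p w)) = h' (Tl1.ht p) + 1 ∧
    Tn.le (Tn.nthChild y (Tl1.slotIdx p w)) (Tn.desc (Tn.nthChild y (Tl1.slotIdx p w)) (h' (Tl1.ht w))) ∧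
    Tn.ht (Tn.desc (Tn.nthChild y (Tl1.slotIdx p w)) (h' (Tl1.ht w))) = h' (Tl1.ht w) ∧
    Tn.le y (Tn.desc (Tn.nthChild y (Tl1.slotIdx p w)) (h' (Tl1.ht w))) := by
  have hwle : Tl1.ht w ≤ l + 1 := ht_le_height hTl1 w
  have hhtw : Tl1.ht w = Tl1.ht p + 1 := (imSucc_iff.1 hpw).2
  have hppos : 1 ≤ Tl1.ht p := ht_pos p
  have hyn : Tn.ht y < n := by
    have h1 := hP2 (Tl1.ht p) (Tl1.ht w) hppos (by omega) hwle
    have h2 := (hP1 (Tl1.ht w) (by omega) hwle).2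
    omega
  have hslot : Tl1.slotIdx p w < Tn.imCard y := by
    have h1 : Tl1.slotIdx p w < Tl1.imCard p := slotIdx_lt hpw
    have h2 : Tl1.imCard p = k := hTl1.1 p (not_leaf_of_ht_lt hTl1 (by omega))
    have h3 : Tn.imCard y = k := hTn.1 y (not_leaf_of_ht_lt hTn hyn)
    omega
  have hnth : Tn.ht (Tn.nthChild y (Tl1.slotIdx p w)) = h' (Tl1.ht p) + 1 := by
    rw [ht_nthChild hslot, hp1]
  have hle1 : Tn.ht (Tn.nthChild y (Tl1.slotIdx p w)) ≤ h' (Tl1.ht w) := by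
    have := hP2 (Tl1.ht p) (Tl1.ht w) hppos (by omega) hwle
    omega
  have hle2 : h' (Tl1.ht w) ≤ n := (hP1 (Tl1.ht w) (by omega) hwle).2
  have hled := le_desc hTn hle1 hle2
  refine ⟨hslot, hnth, hled, ht_desc hTn hle1 hle2, ?_⟩
  exact Tn.le_trans _ _ _ ((imSucc_iff.1 (nthChild_imSucc hslot)).1) hled

include hl1 hTl hTl1 hTn hroot hH hi1 hi2 hP1 hP2 hP3a hP3b hP4 in
lemma Ffun_inv : ∀ w : Fin Tl1.card,
    Tn.ht (Ffun Tl Tl1 Tn g l i h' rootl w).1 = h' (Tl1.ht w) ∧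
    (∀ v, (Ffun Tl Tl1 Tn g l i h' rootl w).2 = some v →
      Tl.ht v = (if Tl1.ht w ≤ i then Tl1.ht w else Tl1.ht w - 1) ∧
      Tn.le (Ffun Tl Tl1 Tn g l i h' rootl w).1 (g v)) := by
  have H : ∀ m : ℕ, ∀ w : Fin Tl1.card, Tl1.ht w ≤ m →
      Tn.ht (Ffun Tl Tl1 Tn g l i h' rootl w).1 = h' (Tl1.ht w) ∧
      (∀ v, (Ffun Tl Tl1 Tn g l i h' rootl w).2 = some v →
        Tl.ht v = (if Tl1.ht w ≤ i then Tl1.ht w else Tl1.ht w - 1) ∧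
        Tn.le (Ffun Tl Tl1 Tn g l i h' rootl w).1 (g v)) := by
    intro m
    induction m with
    | zero => intro w hm; have := ht_pos (T := Tl1) w; omega
    | succ m ih =>
      intro w hm
      by_cases h1 : Tl1.ht w = 1
      · -- root case
        rw [Ffun_root h1]
        have hgr : Tn.ht (g rootl) = h 1 := by rw [hH, hroot]
        have hle : h' 1 ≤ h 1 := by
          by_cases hi01 : i = 1
          · have h4 := hP4 (by omega); rw [hi01] at h4; omega
          · rw [hP3a 1 le_rfl (by omega)]
        have h1p : 1 ≤ h' 1 := (hP1 1 le_rfl (by omega)).1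
        constructor
        · simp only [h1]
          exact ht_anc h1p (by omega)
        · intro v hv
          simp only [Option.some.injEq] at hv
          subst hv
          rw [h1, hroot]
          exact ⟨by simp [hi1], anc_le _ _⟩
      · -- child case
        have hwpos := ht_pos (T := Tl1) w
        have h2 : 2 ≤ Tl1.ht w := by omega
        have hpw : Tl1.ImSucc (Tl1.parent w) w := parent_imSucc h2
        set p := Tl1.parent w with hpdef
        have hhtp : Tl1.ht p = Tl1.ht w - 1 := ht_parent h2
        have hwle : Tl1.ht w ≤ l + 1 := ht_le_height hTl1 w
        obtain ⟨ihp1, ihp2⟩ := ih p (by omega)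
        rcases hr2 : (Ffun Tl Tl1 Tn g l i h' rootl p).2 with _ | v
        · -- none branch
          rw [Ffun_child_none hpw hr2]
          obtain ⟨_, _, _, hd4, _⟩ := step_desc hTl1 hTn hP1 hP2 hpw ihp1
          exact ⟨hd4, by intro v hv; simp at hv⟩
        · -- some branch
          obtain ⟨hv1, hv2⟩ := ihp2 v hr2
          rw [Ffun_child_some hpw hr2]
          by_cases hpi : Tl1.ht p = i
          · -- "pre" branch
            rw [if_pos hpi]
            have hil : i ≤ l := by omega
            have hhtv : Tl.ht v = i := by rw [hv1, hpi]; simp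
            obtain ⟨hd1, hd2, hd3, hd4, hd5⟩ := step_desc hTl1 hTn hP1 hP2 hpw ihp1
            refine ⟨hd4, ?_⟩
            intro v' hv'
            by_cases hlev : Tn.le (Tn.nthChild (Ffun Tl Tl1 Tn g l i h' rootl p).1
                (Tl1.slotIdx p w)) (g v)
            · rw [if_pos hlev] at hv'
              simp only [Option.some.injEq] at hv'
              subst hv'
              have hgv : Tn.ht (g v) = h i := by rw [hH, hhtv]
              have heqc : Tn.nthChild (Ffun Tl Tl1 Tn g l i h' rootl p).1
                  (Tl1.slotIdx p w) = g v := by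
                apply eq_of_le_of_ht_le hlev
                rw [hgv, hd2, hpi]
                have := hP4 hil
                omega
              have hhw : h' (Tl1.ht w) = h i := by
                rw [show Tl1.ht w = i + 1 by omega]
                rw [hP3b (i+1) (by omega) (by omega)]
                simp
              rw [heqc, hhw, ← hgv, desc_self hTn]
              constructor
              · rw [hhtv]; have : ¬ (Tl1.ht w ≤ i) := by omega
                simp [this]; omega
              · exact Tn.le_refl _
            · rw [if_neg hlev] at hv'
              simp at hv'
          · rw [if_neg hpi]
            by_cases hvl : Tl.ht v = l
            · rw [if_pos hvl]
              obtain ⟨_, _, _, hd4, _⟩ := step_desc hTl1 hTn hP1 hP2 hpw ihp1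
              exact ⟨hd4, by intro v' hv'; simp at hv'⟩
            · -- anc branch
              rw [if_neg hvl]
              have hvlt : Tl.ht v < l := by
                have : Tl.ht v ≤ Tl1.ht p := by rw [hv1]; split <;> omega
                omega
              have hslot : Tl1.slotIdx p w < Tl.imCard v := by
                have h1' : Tl1.slotIdx p w < Tl1.imCard p := slotIdx_lt hpw
                have h2' : Tl1.imCard p = k := hTl1.1 p (not_leaf_of_ht_lt hTl1 (by omega))
                have h3' : Tl.imCard v = k := hTl.1 v (not_leaf_of_ht_lt hTl hvlt)
                omega
              set c := Tl.nthChild v (Tl1.slotIdx p w) with hcdef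
              have hhtc : Tl.ht c = Tl.ht v + 1 := ht_nthChild hslot
              have hgc : Tn.ht (g c) = h (Tl.ht v + 1) := by rw [hH, hhtc]
              have hkey : 1 ≤ h' (Tl1.ht w) ∧ h' (Tl1.ht w) ≤ h (Tl.ht v + 1) := by
                refine ⟨(hP1 (Tl1.ht w) (by omega) hwle).1, ?_⟩
                by_cases hplt : Tl1.ht p < i
                · have hvp : Tl.ht v = Tl1.ht p := by rw [hv1]; simp [Nat.le_of_lt hplt]
                  by_cases hwi : Tl1.ht w < i
                  · have harg : Tl1.ht w = Tl.ht v + 1 := by omega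
                    rw [hP3a (Tl1.ht w) (by omega) hwi, harg]
                  · have hwi' : Tl1.ht w = i := by omega
                    have hil : i ≤ l := by
                      have : Tl.ht v + 1 = Tl1.ht w := by omega
                      omega
                    have := hP4 hil
                    rw [hwi']
                    have : Tl.ht v + 1 = i := by omega
                    rw [this]
                    omega
                · have hpgt : i < Tl1.ht p := by omega
                  have hvp : Tl.ht v = Tl1.ht p - 1 := by
                    rw [hv1]; simp [show ¬ (Tl1.ht p ≤ i) by omega]
                  rw [hP3b (Tl1.ht w) (by omega) hwle]
                  have : Tl1.ht w - 1 = Tl.ht v + 1 := by omega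
                  rw [this]
              constructor
              · exact ht_anc hkey.1 (by rw [hgc]; exact hkey.2)
              · intro v' hv'
                simp only [Option.some.injEq] at hv'
                subst hv'
                constructor
                · rw [hhtc, hv1]
                  by_cases hplt : Tl1.ht p < i <;>
                    [skip; skip] <;>
                    · split <;> split <;> omega
                · exact anc_le _ _
  exact fun w => H (Tl1.ht w) w le_rfl

end Construction

end OTree
namespace OTree

section Construction2

variable {k l n : ℕ} {Tl Tl1 Tn : OTree} {g : Fin Tl.card → Fin Tn.card}
  {i : ℕ} {h h' : ℕ → ℕ} {rootl : Fin Tl.card}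

variable (hk : 1 ≤ k) (hl1 : 1 ≤ l)
  (hTl : Regular Tl k l) (hTl1 : Regular Tl1 k (l+1)) (hTn : Regular Tn k n)
  (hroot : Tl.ht rootl = 1)
  (hH : ∀ v, Tn.ht (g v) = h (Tl.ht v))
  (hi1 : 1 ≤ i) (hi2 : i ≤ l + 1)
  (hP1 : ∀ j, 1 ≤ j → j ≤ l + 1 → 1 ≤ h' j ∧ h' j ≤ n)
  (hP2 : ∀ j j', 1 ≤ j → j < j' → j' ≤ l + 1 → h' j < h' j')
  (hP3a : ∀ j, 1 ≤ j → j < i → h' j = h j)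
  (hP3b : ∀ j, i < j → j ≤ l + 1 → h' j = h (j - 1))
  (hP4 : i ≤ l → h' i + 1 = h i)
  (hgi : Function.Injective g)
  (hgm : ∀ v w, g (Tl.meet v w) = Tn.meet (g v) (g w))
  (hgl : ∀ v w, Tl.lex v w → Tn.lex (g v) (g w))

include hl1 hTl hTl1 hTn hroot hH hi1 hi2 hP1 hP2 hP3a hP3b hP4 in
lemma exact_of_ne {p : Fin Tl1.card} {v : Fin Tl.card} (hpi : Tl1.ht p ≠ i)
    (hr2 : (Ffun Tl Tl1 Tn g l i h' rootl p).2 = some v) :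
    (Ffun Tl Tl1 Tn g l i h' rootl p).1 = g v := by
  obtain ⟨hp1, hp2⟩ := Ffun_inv hl1 hTl hTl1 hTn hroot hH hi1 hi2 hP1 hP2 hP3a hP3b hP4 p
  obtain ⟨hv1, hv2⟩ := hp2 v hr2
  have hple : Tl1.ht p ≤ l + 1 := ht_le_height hTl1 p
  have hppos : 1 ≤ Tl1.ht p := ht_pos p
  apply eq_of_le_of_ht_le hv2
  rw [hH, hp1]
  by_cases hplt : Tl1.ht p < i
  · have hvp : Tl.ht v = Tl1.ht p := by rw [hv1]; simp [Nat.le_of_lt hplt]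
    rw [hvp, hP3a (Tl1.ht p) hppos hplt]
  · have hvp : Tl.ht v = Tl1.ht p - 1 := by
      rw [hv1]; simp [show ¬ (Tl1.ht p ≤ i) by omega]
    rw [hvp, hP3b (Tl1.ht p) (by omega) hple]

include hTl1 in
lemma slot_lt_of_lex {p w w' : Fin Tl1.card} (hw : Tl1.ImSucc p w) (hw' : Tl1.ImSucc p w')
    (hne : w ≠ w') (hlex : Tl1.lex w w') : Tl1.slotIdx p w < Tl1.slotIdx p w' := by
  have h1 := nthChild_slotIdx hw
  have h2 := nthChild_slotIdx hw'
  have hne2 : Tl1.slotIdx p w ≠ Tl1.slotIdx p w' := by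
    intro h; apply hne; rw [← h1, ← h2, h]
  rcases Nat.lt_or_ge (Tl1.slotIdx p w) (Tl1.slotIdx p w') with h | h
  · exact h
  · exfalso
    have h3 : Tl1.slotIdx p w' < Tl1.slotIdx p w := by omega
    have := nthChild_lex h3 (slotIdx_lt hw)
    rw [h1, h2] at this
    exact hne (Tl1.lex_antisymm _ _ hlex this.1)

-- Convenient bundle: the branch value shape of `Ffun` at a child.
include hl1 hTl hTl1 hTn hroot hH hi1 hi2 hP1 hP2 hP3a hP3b hP4 in
lemma Ffun_shape {p w : Fin Tl1.card} (hpw : Tl1.ImSucc p w) :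
    (∃ y, y = (Ffun Tl Tl1 Tn g l i h' rootl p).1 ∧
      (Ffun Tl Tl1 Tn g l i h' rootl w).1 =
        Tn.desc (Tn.nthChild y (Tl1.slotIdx p w)) (h' (Tl1.ht w))) ∨
    (∃ v, (Ffun Tl Tl1 Tn g l i h' rootl p).2 = some v ∧ Tl1.ht p ≠ i ∧ Tl.ht v ≠ l ∧
      (Ffun Tl Tl1 Tn g l i h' rootl p).1 = g v ∧
      (Ffun Tl Tl1 Tn g l i h' rootl w).1 =
        Tn.anc (g (Tl.nthChild v (Tl1.slotIdx p w))) (h' (Tl1.ht w))) := by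
  rcases hr2 : (Ffun Tl Tl1 Tn g l i h' rootl p).2 with _ | v
  · left
    exact ⟨_, rfl, by rw [Ffun_child_none hpw hr2]⟩
  · by_cases hpi : Tl1.ht p = i
    · left
      refine ⟨_, rfl, ?_⟩
      rw [Ffun_child_some hpw hr2, if_pos hpi]
    · by_cases hvl : Tl.ht v = l
      · left
        refine ⟨_, rfl, ?_⟩
        rw [Ffun_child_some hpw hr2, if_neg hpi, if_pos hvl]
      · right
        refine ⟨v, rfl, hpi, hvl, exact_of_ne hl1 hTl hTl1 hTn hroot hH hi1 hi2 hP1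
          hP2 hP3a hP3b hP4 hpi hr2, ?_⟩
        rw [Ffun_child_some hpw hr2, if_neg hpi, if_neg hvl]

end Construction2

end OTree
namespace OTree

section Construction3

variable {k l n : ℕ} {Tl Tl1 Tn : OTree} {g : Fin Tl.card → Fin Tn.card}
  {i : ℕ} {h h' : ℕ → ℕ} {rootl : Fin Tl.card}

local notation "FF" => Ffun Tl Tl1 Tn g l i h' rootl

variable (hk : 1 ≤ k) (hl1 : 1 ≤ l)
  (hTl : Regular Tl k l) (hTl1 : Regular Tl1 k (l+1)) (hTn : Regular Tn k n)
  (hroot : Tl.ht rootl = 1)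
  (hH : ∀ v, Tn.ht (g v) = h (Tl.ht v))
  (hi1 : 1 ≤ i) (hi2 : i ≤ l + 1)
  (hP1 : ∀ j, 1 ≤ j → j ≤ l + 1 → 1 ≤ h' j ∧ h' j ≤ n)
  (hP2 : ∀ j j', 1 ≤ j → j < j' → j' ≤ l + 1 → h' j < h' j')
  (hP3a : ∀ j, 1 ≤ j → j < i → h' j = h j)
  (hP3b : ∀ j, i < j → j ≤ l + 1 → h' j = h (j - 1))
  (hP4 : i ≤ l → h' i + 1 = h i)
  (hgi : Function.Injective g)
  (hgm : ∀ v w, g (Tl.meet v w) = Tn.meet (g v) (g w))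
  (hgl : ∀ v w, Tl.lex v w → Tn.lex (g v) (g w))

include hl1 hTl hTl1 hTn hroot hH hi1 hi2 hP1 hP2 hP3a hP3b hP4 in
lemma Ffun_shape2 {p w w' : Fin Tl1.card} (hw : Tl1.ImSucc p w) (hw' : Tl1.ImSucc p w') :
    (∃ y, y = (FF p).1 ∧
      (FF w).1 = Tn.desc (Tn.nthChild y (Tl1.slotIdx p w)) (h' (Tl1.ht w)) ∧
      (FF w').1 = Tn.desc (Tn.nthChild y (Tl1.slotIdx p w')) (h' (Tl1.ht w'))) ∨
    (∃ v, Tl1.ht p ≠ i ∧ Tl.ht v < l ∧ (FF p).2 = some v ∧ (FF p).1 = g v ∧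
      Tl1.slotIdx p w < Tl.imCard v ∧ Tl1.slotIdx p w' < Tl.imCard v ∧
      (FF w).1 = Tn.anc (g (Tl.nthChild v (Tl1.slotIdx p w))) (h' (Tl1.ht w)) ∧
      (FF w').1 = Tn.anc (g (Tl.nthChild v (Tl1.slotIdx p w'))) (h' (Tl1.ht w'))) := by
  rcases hr2 : (FF p).2 with _ | v
  · left
    exact ⟨_, rfl, by rw [Ffun_child_none hw hr2], by rw [Ffun_child_none hw' hr2]⟩
  · by_cases hpi : Tl1.ht p = i
    · left
      refine ⟨_, rfl, ?_, ?_⟩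
      · rw [Ffun_child_some hw hr2, if_pos hpi]
      · rw [Ffun_child_some hw' hr2, if_pos hpi]
    · by_cases hvl : Tl.ht v = l
      · left
        refine ⟨_, rfl, ?_, ?_⟩
        · rw [Ffun_child_some hw hr2, if_neg hpi, if_pos hvl]
        · rw [Ffun_child_some hw' hr2, if_neg hpi, if_pos hvl]
      · right
        obtain ⟨hp1, hp2⟩ := Ffun_inv hl1 hTl hTl1 hTn hroot hH hi1 hi2 hP1 hP2 hP3a hP3b hP4 p
        obtain ⟨hv1, _⟩ := hp2 v hr2
        have hvlt : Tl.ht v < l := by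
          have h1 : Tl.ht v ≤ Tl1.ht p := by rw [hv1]; split <;> omega
          have h3 := ht_le_height hTl v
          omega
        have hcard : ∀ u : Fin Tl1.card, Tl1.ImSucc p u → Tl1.slotIdx p u < Tl.imCard v := by
          intro u hu
          have h1' : Tl1.slotIdx p u < Tl1.imCard p := slotIdx_lt hu
          have hple : Tl1.ht p < l + 1 := by
            have := ht_lt_of_lt hu.1 hu.2.1
            have := ht_le_height hTl1 u
            omega
          have h2' : Tl1.imCard p = k := hTl1.1 p (not_leaf_of_ht_lt hTl1 hple)
          have h3' : Tl.imCard v = k := hTl.1 v (not_leaf_of_ht_lt hTl hvlt)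
          omega
        refine ⟨v, hpi, hvlt, rfl, exact_of_ne hl1 hTl hTl1 hTn hroot hH hi1 hi2 hP1
          hP2 hP3a hP3b hP4 hpi hr2, hcard w hw, hcard w' hw', ?_, ?_⟩
        · rw [Ffun_child_some hw hr2, if_neg hpi, if_neg hvl]
        · rw [Ffun_child_some hw' hr2, if_neg hpi, if_neg hvl]

include hl1 hTl hTl1 hTn hroot hH hi1 hi2 hP1 hP2 hP3a hP3b hP4 hgm in
lemma Ffun_b {p w : Fin Tl1.card} (hpw : Tl1.ImSucc p w) :
    Tn.le ((FF p).1) ((FF w).1) := by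
  have hinvp := Ffun_inv hl1 hTl hTl1 hTn hroot hH hi1 hi2 hP1 hP2 hP3a hP3b hP4 p
  have hinvw := Ffun_inv hl1 hTl hTl1 hTn hroot hH hi1 hi2 hP1 hP2 hP3a hP3b hP4 w
  rcases Ffun_shape2 hl1 hTl hTl1 hTn hroot hH hi1 hi2 hP1 hP2 hP3a hP3b hP4 hpw hpw with
    ⟨y, hy, hw1, _⟩ | ⟨v, hpi, hvlt, hr2, hpv, hslot, _, hw1, _⟩
  · rw [hw1, ← hy]
    exact (step_desc hTl1 hTn hP1 hP2 hpw (hy ▸ hinvp.1)).2.2.2.2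
  · set c := Tl.nthChild v (Tl1.slotIdx p w) with hc
    have hvc : Tl.le v c := (nthChild_imSucc hslot).1
    have hmono := mono_of_meet hgm
    have hgvc : Tn.le (g v) (g c) := hmono _ _ hvc
    rw [hw1, hpv]
    have hanc : Tn.ht (Tn.anc (g c) (h' (Tl1.ht w))) = h' (Tl1.ht w) := by
      have := hinvw.1
      rwa [hw1] at this
    apply le_of_both_le hgvc (anc_le _ _)
    rw [hanc, ← hpv, hinvp.1]
    have h1 := (imSucc_iff.1 hpw).2
    have := hP2 (Tl1.ht p) (Tl1.ht w) (ht_pos p) (by omega) (ht_le_height hTl1 w)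
    omega

include hl1 hTl hTl1 hTn hroot hH hi1 hi2 hP1 hP2 hP3a hP3b hP4 hgm in
lemma Ffun_c {p w w' : Fin Tl1.card} {z : Fin Tn.card}
    (hw : Tl1.ImSucc p w) (hw' : Tl1.ImSucc p w') (hne : w ≠ w')
    (hz : Tn.le z ((FF w).1)) (hz' : Tn.le z ((FF w').1)) : Tn.le z ((FF p).1) := by
  have hinvp := Ffun_inv hl1 hTl hTl1 hTn hroot hH hi1 hi2 hP1 hP2 hP3a hP3b hP4 p
  have hss : Tl1.slotIdx p w ≠ Tl1.slotIdx p w' := by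
    intro hcontra
    apply hne
    rw [← nthChild_slotIdx hw, ← nthChild_slotIdx hw', hcontra]
  rcases Ffun_shape2 hl1 hTl hTl1 hTn hroot hH hi1 hi2 hP1 hP2 hP3a hP3b hP4 hw hw' with
    ⟨y, hy, hw1, hw2⟩ | ⟨v, hpi, hvlt, hr2, hpv, hslot, hslot', hw1, hw2⟩
  · obtain ⟨hs1, _, hs3, _, _⟩ := step_desc hTl1 hTn hP1 hP2 hw (hy ▸ hinvp.1)
    obtain ⟨hs1', _, hs3', _, _⟩ := step_desc hTl1 hTn hP1 hP2 hw' (hy ▸ hinvp.1)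
    have hcc : Tn.nthChild y (Tl1.slotIdx p w) ≠ Tn.nthChild y (Tl1.slotIdx p w') := by
      intro hcontra
      apply hss
      rw [← slotIdx_nthChild hs1, ← slotIdx_nthChild hs1', hcontra]
    rw [hw1] at hz
    rw [hw2] at hz'
    rw [← hy]
    exact le_of_le_distinct_children (nthChild_imSucc hs1) (nthChild_imSucc hs1') hcc
      hs3 hs3' hz hz'
  · set c := Tl.nthChild v (Tl1.slotIdx p w) with hcdef
    set c' := Tl.nthChild v (Tl1.slotIdx p w') with hcdef'
    have hcc : c ≠ c' := by
      intro hcontra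
      apply hss
      rw [← slotIdx_nthChild hslot, ← slotIdx_nthChild hslot', ← hcdef, ← hcdef', hcontra]
    have hz1 : Tn.le z (g c) := Tn.le_trans _ _ _ (hw1 ▸ hz) (anc_le _ _)
    have hz2 : Tn.le z (g c') := Tn.le_trans _ _ _ (hw2 ▸ hz') (anc_le _ _)
    have hmeet : Tn.le z (Tn.meet (g c) (g c')) := le_meet hz1 hz2
    rw [← hgm, meet_siblings (nthChild_imSucc hslot) (nthChild_imSucc hslot') hcc] at hmeet
    rw [hpv]
    exact hmeet

include hl1 hTl hTl1 hTn hroot hH hi1 hi2 hP1 hP2 hP3a hP3b hP4 hgi hgm hgl in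
lemma Ffun_d {p w w' : Fin Tl1.card}
    (hw : Tl1.ImSucc p w) (hw' : Tl1.ImSucc p w') (hne : w ≠ w')
    (hlex : Tl1.lex w w') : Tn.lex ((FF w).1) ((FF w').1) := by
  have hinvp := Ffun_inv hl1 hTl hTl1 hTn hroot hH hi1 hi2 hP1 hP2 hP3a hP3b hP4 p
  have hinvw := Ffun_inv hl1 hTl hTl1 hTn hroot hH hi1 hi2 hP1 hP2 hP3a hP3b hP4 w
  have hinvw' := Ffun_inv hl1 hTl hTl1 hTn hroot hH hi1 hi2 hP1 hP2 hP3a hP3b hP4 w'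
  have hslt : Tl1.slotIdx p w < Tl1.slotIdx p w' := slot_lt_of_lex hTl1 hw hw' hne hlex
  have hww : Tl1.ht w = Tl1.ht w' := by
    rw [(imSucc_iff.1 hw).2, (imSucc_iff.1 hw').2]
  rcases Ffun_shape2 hl1 hTl hTl1 hTn hroot hH hi1 hi2 hP1 hP2 hP3a hP3b hP4 hw hw' with
    ⟨y, hy, hw1, hw2⟩ | ⟨v, hpi, hvlt, hr2, hpv, hslot, hslot', hw1, hw2⟩
  · obtain ⟨hs1, hs2, hs3, _, _⟩ := step_desc hTl1 hTn hP1 hP2 hw (hy ▸ hinvp.1)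
    obtain ⟨hs1', hs2', hs3', _, _⟩ := step_desc hTl1 hTn hP1 hP2 hw' (hy ▸ hinvp.1)
    obtain ⟨hlexc, hnec⟩ := nthChild_lex hslt hs1'
    have hht : Tn.ht (Tn.nthChild y (Tl1.slotIdx p w)) = Tn.ht (Tn.nthChild y (Tl1.slotIdx p w')) := by
      rw [hs2, hs2']
    have hn1 : ¬ Tn.le (Tn.nthChild y (Tl1.slotIdx p w)) (Tn.nthChild y (Tl1.slotIdx p w')) :=
      fun hle => hnec (eq_of_le_of_ht_le hle (by omega))
    have hn2 : ¬ Tn.le (Tn.nthChild y (Tl1.slotIdx p w')) (Tn.nthChild y (Tl1.slotIdx p w)) :=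
      fun hle => hnec (eq_of_le_of_ht_le hle (by omega)).symm
    rw [hw1, hw2]
    exact Tn.lex_compat _ _ _ _ hn1 hn2 hlexc hs3 hs3'
  · set c := Tl.nthChild v (Tl1.slotIdx p w) with hcdef
    set c' := Tl.nthChild v (Tl1.slotIdx p w') with hcdef'
    obtain ⟨hlexc, hnec⟩ := nthChild_lex hslt hslot'
    rw [← hcdef, ← hcdef'] at hlexc hnec
    have hglex : Tn.lex (g c) (g c') := hgl _ _ hlexc
    have hmeetv : Tn.meet (g c) (g c') = g v := by
      rw [← hgm, meet_siblings (nthChild_imSucc hslot) (nthChild_imSucc hslot') hnec]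
    have hgcne : g c ≠ g c' := fun hcontra => hnec (hgi hcontra)
    have hhtc : Tl.ht c = Tl.ht c' := by
      rw [hcdef, hcdef', ht_nthChild hslot, ht_nthChild hslot']
    have hghtc : Tn.ht (g c) = Tn.ht (g c') := by rw [hH, hH, hhtc]
    have hngc1 : ¬ Tn.le (g c) (g c') := fun hle => hgcne (eq_of_le_of_ht_le hle (by omega))
    have hngc2 : ¬ Tn.le (g c') (g c) := fun hle => hgcne (eq_of_le_of_ht_le hle (by omega)).symm
    -- heights of the anc values
    have hhw1 : Tn.ht ((FF w).1) = h' (Tl1.ht w) := hinvw.1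
    have hhw2 : Tn.ht ((FF w').1) = h' (Tl1.ht w') := hinvw'.1
    have hhp : Tn.ht (g v) = h' (Tl1.ht p) := by rw [← hpv, hinvp.1]
    have hplt : h' (Tl1.ht p) < h' (Tl1.ht w) := by
      have h1 := (imSucc_iff.1 hw).2
      exact hP2 (Tl1.ht p) (Tl1.ht w) (ht_pos p) (by omega) (ht_le_height hTl1 w)
    have hle1 : Tn.le ((FF w).1) (g c) := hw1 ▸ anc_le _ _
    have hle2 : Tn.le ((FF w').1) (g c') := hw2 ▸ anc_le _ _
    have hnab : ¬ Tn.le ((FF w).1) ((FF w').1) := by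
      intro hle
      have hza : Tn.le ((FF w).1) (g c') := Tn.le_trans _ _ _ hle hle2
      have : Tn.le ((FF w).1) (g v) := hmeetv ▸ le_meet hle1 hza
      have := ht_le_of_le this
      omega
    have hnba : ¬ Tn.le ((FF w').1) ((FF w).1) := by
      intro hle
      have hza : Tn.le ((FF w').1) (g c) := Tn.le_trans _ _ _ hle hle1
      have : Tn.le ((FF w').1) (g v) := hmeetv ▸ le_meet hza hle2
      have := ht_le_of_le this
      rw [hhw2, ← hww] at this
      omega
    exact lex_reflect hle1 hle2 hnab hnba hglex

end Construction3

end OTree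
namespace OTree

section Construction4

variable {k l n : ℕ} {Tl Tl1 Tn : OTree} {g : Fin Tl.card → Fin Tn.card}
  {i : ℕ} {h h' : ℕ → ℕ} {rootl : Fin Tl.card}

local notation "FF" => Ffun Tl Tl1 Tn g l i h' rootl

variable (hk : 1 ≤ k) (hl1 : 1 ≤ l)
  (hTl : Regular Tl k l) (hTl1 : Regular Tl1 k (l+1)) (hTn : Regular Tn k n)
  (hroot : Tl.ht rootl = 1)
  (hH : ∀ v, Tn.ht (g v) = h (Tl.ht v))
  (hi1 : 1 ≤ i) (hi2 : i ≤ l + 1)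
  (hP1 : ∀ j, 1 ≤ j → j ≤ l + 1 → 1 ≤ h' j ∧ h' j ≤ n)
  (hP2 : ∀ j j', 1 ≤ j → j < j' → j' ≤ l + 1 → h' j < h' j')
  (hP3a : ∀ j, 1 ≤ j → j < i → h' j = h j)
  (hP3b : ∀ j, i < j → j ≤ l + 1 → h' j = h (j - 1))
  (hP4 : i ≤ l → h' i + 1 = h i)

include hl1 hTl hTl1 hTn hroot hH hi1 hi2 hP1 hP2 hP3a hP3b hP4 in
/-- from a node `w` carrying the tag `some v` whose value is still strictly below
`g v` (the "pre" situation at level `i`), produce a child of `w` with value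
exactly `g v`. -/
lemma Ffun_push {w : Fin Tl1.card} {v : Fin Tl.card}
    (hw2 : (FF w).2 = some v) (hwi : Tl1.ht w = i) (hvi : Tl.ht v = i) (hil : i ≤ l) :
    ∃ w' : Fin Tl1.card, (FF w').2 = some v ∧ (FF w').1 = g v ∧ Tl1.ht w' = i + 1 := by
  obtain ⟨hw1, hwtag⟩ := Ffun_inv hl1 hTl hTl1 hTn hroot hH hi1 hi2 hP1 hP2 hP3a hP3b hP4 w
  obtain ⟨_, hwle⟩ := hwtag v hw2
  have hgv : Tn.ht (g v) = h i := by rw [hH, hvi]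
  have hP4' := hP4 hil
  have himsucc : Tn.ImSucc ((FF w).1) (g v) := by
    rw [imSucc_iff]
    exact ⟨hwle, by rw [hgv, hw1, hwi]; omega⟩
  set s := Tn.slotIdx ((FF w).1) (g v) with hs
  have hslt : s < Tn.imCard ((FF w).1) := slotIdx_lt himsucc
  have hcardn : Tn.imCard ((FF w).1) = k := by
    apply hTn.1
    apply not_leaf_of_ht_lt hTn
    rw [hw1, hwi]
    have h2 := (hP1 i (by omega) (by omega)).2
    have h3 := ht_le_height hTn (g v)
    omega
  have hwcard : Tl1.imCard w = k := by
    apply hTl1.1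
    apply not_leaf_of_ht_lt hTl1
    omega
  have hslt1 : s < Tl1.imCard w := by omega
  set w' := Tl1.nthChild w s with hw'
  have himsucc' : Tl1.ImSucc w w' := nthChild_imSucc hslt1
  have hslot' : Tl1.slotIdx w w' = s := slotIdx_nthChild hslt1
  have hnth : Tn.nthChild ((FF w).1) (Tl1.slotIdx w w') = g v := by
    rw [hslot', hs]
    exact nthChild_slotIdx himsucc
  have hhtw' : Tl1.ht w' = i + 1 := by
    rw [hw', ht_nthChild hslt1, hwi]
  have hhw' : h' (Tl1.ht w') = h i := by
    rw [hhtw', hP3b (i+1) (by omega) (by omega)]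
    simp
  have hFw' := Ffun_child_some himsucc' hw2
  rw [if_pos hwi, hnth, if_pos (Tn.le_refl (g v))] at hFw'
  refine ⟨w', by rw [hFw'], ?_, hhtw'⟩
  rw [hFw']
  simp only
  rw [hhw', ← hgv, desc_self hTn]

include hk hl1 hTl hTl1 hTn hroot hH hi1 hi2 hP1 hP2 hP3a hP3b hP4 in
lemma Ffun_exact : ∀ v : Fin Tl.card, ∃ w : Fin Tl1.card,
    (FF w).2 = some v ∧ (FF w).1 = g v ∧
    Tl1.ht w = (if Tl.ht v < i then Tl.ht v else Tl.ht v + 1) := by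
  have hcard1 : Tl1.card ≠ 0 := fun hcc => by have := hTl1.2.2.1 hcc; omega
  have H : ∀ m : ℕ, ∀ v : Fin Tl.card, Tl.ht v ≤ m → ∃ w : Fin Tl1.card,
      (FF w).2 = some v ∧ (FF w).1 = g v ∧
      Tl1.ht w = (if Tl.ht v < i then Tl.ht v else Tl.ht v + 1) := by
    intro m
    induction m with
    | zero => intro v hm; have := ht_pos (T := Tl) v; omega
    | succ m ih =>
      intro v hm
      by_cases hv1 : Tl.ht v = 1
      · -- v is the root of Tl
        have hveq : v = rootl := ht_one_unique hv1 hroot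
        rw [hveq]
        have x0 : Fin Tl1.card := ⟨0, Nat.pos_of_ne_zero hcard1⟩
        set r1 := Tl1.anc x0 1 with hr1
        have hhtr1 : Tl1.ht r1 = 1 := ht_anc le_rfl (ht_pos x0)
        have hFr1 := Ffun_root (Tl := Tl) (Tn := Tn) (g := g) (l := l) (i := i)
          (h' := h') (rootl := rootl) hhtr1
        have hgr : Tn.ht (g rootl) = h 1 := by rw [hH, hroot]
        by_cases hione : i = 1
        · -- need to go one level further
          have hil : i ≤ l := by omega
          obtain ⟨w, hw2, hw1, hhtw⟩ := Ffun_push hl1 hTl hTl1 hTn hroot hH hi1 hi2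
            hP1 hP2 hP3a hP3b hP4 (w := r1) (v := rootl)
            (by rw [hFr1]) (by omega) (by omega) hil
          exact ⟨w, hw2, hw1, by rw [hhtw, hroot]; simp [hione]⟩
        · refine ⟨r1, by rw [hFr1], ?_, by rw [hhtr1, hroot, if_pos (show 1 < i by omega)]⟩
          rw [hFr1]
          simp only
          rw [hP3a 1 le_rfl (by omega), ← hgr, anc_self]
      · -- v has a parent
        have hvpos := ht_pos (T := Tl) v
        have hv2 : 2 ≤ Tl.ht v := by omega
        have hvle : Tl.ht v ≤ l := ht_le_height hTl v
        have hpv : Tl.ImSucc (Tl.parent v) v := parent_imSucc hv2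
        set pv := Tl.parent v with hpvdef
        have hhtpv : Tl.ht pv = Tl.ht v - 1 := ht_parent hv2
        obtain ⟨wp, hwp2, hwp1, hhtwp⟩ := ih pv (by omega)
        have hpvlt : Tl.ht pv < l := by omega
        have hicard : Tl.imCard pv = k := hTl.1 pv (not_leaf_of_ht_lt hTl hpvlt)
        set sv := Tl.slotIdx pv v with hsv
        have hsvlt : sv < Tl.imCard pv := slotIdx_lt hpv
        have hhtwp_ne : Tl1.ht wp ≠ i := by rw [hhtwp]; split <;> omega
        have hhtwp_le : Tl1.ht wp ≤ l := by rw [hhtwp]; split <;> omega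
        have hwpcard : Tl1.imCard wp = k := hTl1.1 wp (not_leaf_of_ht_lt hTl1 (by omega))
        have hsvlt1 : sv < Tl1.imCard wp := by omega
        set w1 := Tl1.nthChild wp sv with hw1def
        have himsucc1 : Tl1.ImSucc wp w1 := nthChild_imSucc hsvlt1
        have hslot1 : Tl1.slotIdx wp w1 = sv := slotIdx_nthChild hsvlt1
        have hnth1 : Tl.nthChild pv (Tl1.slotIdx wp w1) = v := by
          rw [hslot1, hsv]; exact nthChild_slotIdx hpv
        have hhtw1 : Tl1.ht w1 = Tl1.ht wp + 1 := ht_nthChild hsvlt1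
        have hvnl : Tl.ht pv ≠ l := by omega
        have hFw1 : FF w1 = (Tn.anc (g v) (h' (Tl1.ht w1)), some v) := by
          rw [Ffun_child_some himsucc1 hwp2, if_neg hhtwp_ne, if_neg hvnl, hnth1]
        by_cases hw1i : Tl1.ht w1 = i
        · -- pre node; push one level further
          have hvi : Tl.ht v = i := by
            rw [hhtw1, hhtwp] at hw1i
            split at hw1i <;> omega
          have hil : i ≤ l := by omega
          obtain ⟨w, hw2, hw1', hhtw⟩ := Ffun_push hl1 hTl hTl1 hTn hroot hH hi1 hi2
            hP1 hP2 hP3a hP3b hP4 (w := w1) (v := v) (by rw [hFw1]) hw1i hvi hil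
          exact ⟨w, hw2, hw1', by rw [hhtw, hvi]; simp⟩
        · -- already exact
          have hw1le : Tl1.ht w1 ≤ l + 1 := ht_le_height hTl1 w1
          have hkey : h' (Tl1.ht w1) = h (Tl.ht v) := by
            by_cases hlt : Tl1.ht w1 < i
            · have hplti : Tl.ht pv < i := by
                by_contra hcon
                rw [if_neg hcon] at hhtwp
                omega
              rw [if_pos hplti] at hhtwp
              have harg : Tl1.ht w1 = Tl.ht v := by omega
              rw [hP3a (Tl1.ht w1) (by omega) hlt, harg]
            · have hgt : i < Tl1.ht w1 := by omega
              have hpgei : ¬ (Tl.ht pv < i) := by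
                intro hcon
                rw [if_pos hcon] at hhtwp
                omega
              rw [if_neg hpgei] at hhtwp
              have harg : Tl1.ht w1 - 1 = Tl.ht v := by omega
              rw [hP3b (Tl1.ht w1) hgt (by omega), harg]
          refine ⟨w1, by rw [hFw1], ?_, ?_⟩
          · rw [hFw1]
            simp only
            rw [hkey, ← hH, anc_self]
          · rw [hhtw1, hhtwp]
            have hc1 : ¬ (Tl.ht pv < i) → ¬ (Tl.ht v < i) := by omega
            by_cases hcc : Tl.ht pv < i
            · simp only [if_pos hcc]
              have hvi : Tl.ht v < i ∨ Tl.ht v = i := by omega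
              rcases hvi with hvi | hvi
              · simp [hvi]; omega
              · exfalso
                apply hw1i
                rw [hhtw1, hhtwp, if_pos hcc]
                omega
            · simp only [if_neg hcc, if_neg (hc1 hcc)]
              omega
  exact fun v => H (Tl.ht v) v le_rfl

end Construction4

end OTree
namespace OTree

section Construction5

variable {k l n : ℕ} {Tl Tl1 Tn : OTree} {g : Fin Tl.card → Fin Tn.card}
  {i : ℕ} {h h' : ℕ → ℕ} {rootl : Fin Tl.card}

variable (hk : 1 ≤ k) (hl1 : 1 ≤ l)
  (hTl : Regular Tl k l) (hTl1 : Regular Tl1 k (l+1)) (hTn : Regular Tn k n)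
  (hroot : Tl.ht rootl = 1)
  (hH : ∀ v, Tn.ht (g v) = h (Tl.ht v))
  (hi1 : 1 ≤ i) (hi2 : i ≤ l + 1)
  (hP1 : ∀ j, 1 ≤ j → j ≤ l + 1 → 1 ≤ h' j ∧ h' j ≤ n)
  (hP2 : ∀ j j', 1 ≤ j → j < j' → j' ≤ l + 1 → h' j < h' j')
  (hP3a : ∀ j, 1 ≤ j → j < i → h' j = h j)
  (hP3b : ∀ j, i < j → j ≤ l + 1 → h' j = h (j - 1))
  (hP4 : i ≤ l → h' i + 1 = h i)
  (hgi : Function.Injective g)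
  (hgm : ∀ v w, g (Tl.meet v w) = Tn.meet (g v) (g w))
  (hgl : ∀ v w, Tl.lex v w → Tn.lex (g v) (g w))

include hk hl1 hTl hTl1 hTn hroot hH hi1 hi2 hP1 hP2 hP3a hP3b hP4 hgi hgm hgl in
lemma Ffun_main :
    ∃ G : Fin Tl1.card → Fin Tn.card,
      Function.Injective G ∧ (∀ v w, G (Tl1.meet v w) = Tn.meet (G v) (G w)) ∧
      (∀ v w, Tl1.lex v w → Tn.lex (G v) (G w)) ∧
      (∀ w, Tn.ht (G w) = h' (Tl1.ht w)) ∧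
      (∀ v, ∃ w, G w = g v) := by
  set G : Fin Tl1.card → Fin Tn.card := fun w => (Ffun Tl Tl1 Tn g l i h' rootl w).1 with hG
  have hinv := Ffun_inv (g := g) (rootl := rootl) hl1 hTl hTl1 hTn hroot hH hi1 hi2
    hP1 hP2 hP3a hP3b hP4
  have hht : ∀ w, Tn.ht (G w) = h' (Tl1.ht w) := fun w => (hinv w).1
  have ha : ∀ v w : Fin Tl1.card, Tl1.ht v < Tl1.ht w → Tn.ht (G v) < Tn.ht (G w) := by
    intro v w hvw
    rw [hht, hht]
    exact hP2 _ _ (ht_pos v) hvw (ht_le_height hTl1 w)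
  have ha' : ∀ v w : Fin Tl1.card, Tl1.ht v = Tl1.ht w → Tn.ht (G v) = Tn.ht (G w) := by
    intro v w hvw
    rw [hht, hht, hvw]
  have hb : ∀ p w : Fin Tl1.card, Tl1.ImSucc p w → Tn.le (G p) (G w) :=
    fun p w hpw => Ffun_b hl1 hTl hTl1 hTn hroot hH hi1 hi2 hP1 hP2 hP3a hP3b hP4 hgm hpw
  have hc : ∀ p w w' : Fin Tl1.card, ∀ z : Fin Tn.card, Tl1.ImSucc p w → Tl1.ImSucc p w' →
      w ≠ w' → Tn.le z (G w) → Tn.le z (G w') → Tn.le z (G p) :=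
    fun p w w' z hw hw' hne hz hz' =>
      Ffun_c hl1 hTl hTl1 hTn hroot hH hi1 hi2 hP1 hP2 hP3a hP3b hP4 hgm hw hw' hne hz hz'
  have hd : ∀ p w w' : Fin Tl1.card, Tl1.ImSucc p w → Tl1.ImSucc p w' → w ≠ w' →
      Tl1.lex w w' → Tn.lex (G w) (G w') :=
    fun p w w' hw hw' hne hlex =>
      Ffun_d hl1 hTl hTl1 hTn hroot hH hi1 hi2 hP1 hP2 hP3a hP3b hP4 hgi hgm hgl hw hw' hne hlex
  refine ⟨G, key_inj ha ha' hb hc, key_meet ha ha' hb hc, key_lex ha ha' hb hc hd, hht, ?_⟩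
  intro v
  obtain ⟨w, _, hw1, _⟩ := Ffun_exact (g := g) (rootl := rootl) hk hl1 hTl hTl1 hTn hroot hH
    hi1 hi2 hP1 hP2 hP3a hP3b hP4 v
  exact ⟨w, hw1⟩

end Construction5

end OTree
open OTree
/-- Every strong embedding `g : T^l → T^n` of regular trees with branching `k ≥ 1` and
`l < n` factors as `g = g₂ ∘ g₁` through `T^{l+1}` with `g₁`, `g₂` strong embeddings, and
likewise for strong leaf preserving embeddings. -/
theorem strong_embedding_factors (k l n : ℕ) (hk : 1 ≤ k) (hln : l < n)
    (Tl Tl1 Tn : OTree) (hTl : Regular Tl k l) (hTl1 : Regular Tl1 k (l + 1))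
    (hTn : Regular Tn k n) :
    (∀ g : Fin Tl.card → Fin Tn.card, IsEmb Tl Tn g → Strong Tl Tn g →
      ∃ (g₁ : Fin Tl.card → Fin Tl1.card) (g₂ : Fin Tl1.card → Fin Tn.card),
        IsEmb Tl Tl1 g₁ ∧ Strong Tl Tl1 g₁ ∧ IsEmb Tl1 Tn g₂ ∧ Strong Tl1 Tn g₂ ∧
        g = g₂ ∘ g₁) ∧
    (∀ g : Fin Tl.card → Fin Tn.card, IsEmb Tl Tn g → Strong Tl Tn g → LeafPres Tl Tn g →
      ∃ (g₁ : Fin Tl.card → Fin Tl1.card) (g₂ : Fin Tl1.card → Fin Tn.card),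
        IsEmb Tl Tl1 g₁ ∧ Strong Tl Tl1 g₁ ∧ LeafPres Tl Tl1 g₁ ∧
        IsEmb Tl1 Tn g₂ ∧ Strong Tl1 Tn g₂ ∧ LeafPres Tl1 Tn g₂ ∧
        g = g₂ ∘ g₁) := by
  have main : ∀ g : Fin Tl.card → Fin Tn.card, IsEmb Tl Tn g → Strong Tl Tn g →
      ∃ (g₁ : Fin Tl.card → Fin Tl1.card) (g₂ : Fin Tl1.card → Fin Tn.card),
        IsEmb Tl Tl1 g₁ ∧ Strong Tl Tl1 g₁ ∧ IsEmb Tl1 Tn g₂ ∧ Strong Tl1 Tn g₂ ∧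
        g = g₂ ∘ g₁ ∧ (LeafPres Tl Tn g → LeafPres Tl Tl1 g₁ ∧ LeafPres Tl1 Tn g₂) := by
    intro g hemb hstrong
    obtain ⟨hgi, hgm, hgl, _⟩ := hemb
    by_cases hl0 : l = 0
    · -- empty domain
      have hcard0 : Tl.card = 0 := hTl.2.2.mpr hl0
      have hF : ∀ v : Fin Tl.card, False := by
        intro v; have := v.isLt; omega
      have hsub : ∀ v w : Fin Tl1.card, v = w := by
        intro v w
        have h1 : Tl1.ht v = 1 := by
          have h2 := ht_le_height hTl1 v; have := ht_pos (T := Tl1) v; omega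
        have h2 : Tl1.ht w = 1 := by
          have h3 := ht_le_height hTl1 w; have := ht_pos (T := Tl1) w; omega
        exact ht_one_unique h1 h2
      have hcardn : Tn.card ≠ 0 := fun hc => by have := hTn.2.2.1 hc; omega
      have x0 : Fin Tn.card := ⟨0, Nat.pos_of_ne_zero hcardn⟩
      obtain ⟨lf, hlfle, hlf⟩ := exists_leaf_above (T := Tn) x0
      refine ⟨fun v => (hF v).elim, fun _ => lf, ?_, ?_, ?_, ?_, ?_, ?_⟩
      · refine ⟨?_, ?_, ?_, ?_⟩
        · intro a b _; exact (hF a).elim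
        · intro v _; exact (hF v).elim
        · intro v w _; exact (hF v).elim
        · intro v w₁ w₂ _ _ _ _; exact (hF v).elim
      · intro v _ _; exact (hF v).elim
      · refine ⟨fun a b _ => hsub a b, ?_, ?_, ?_⟩
        · intro v w; exact (meet_self lf).symm
        · intro v w _; exact lex_refl _
        · rintro v w₁ w₂ _ _ _ ⟨v', hv', _⟩
          exact absurd (hsub v v') hv'.2.1
      · intro v w _; rfl
      · funext v; exact (hF v).elim
      · exact fun _ => ⟨fun v _ => (hF v).elim, fun _ _ => hlf⟩
    · -- nonempty domain
      have hl1 : 1 ≤ l := by omega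
      have hcardl : Tl.card ≠ 0 := fun hc => by have := hTl.2.2.1 hc; omega
      have x0 : Fin Tl.card := ⟨0, Nat.pos_of_ne_zero hcardl⟩
      set rootl := Tl.anc x0 1 with hrootdef
      have hroot : Tl.ht rootl = 1 := ht_anc le_rfl (ht_pos x0)
      set h : ℕ → ℕ := fun j => Tn.ht (g (Tl.desc rootl j)) with hhdef
      have hdj : ∀ j, 1 ≤ j → j ≤ l → Tl.ht (Tl.desc rootl j) = j := by
        intro j h1 h2
        exact ht_desc hTl (by rw [hroot]; exact h1) h2
      have hH : ∀ v, Tn.ht (g v) = h (Tl.ht v) := by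
        intro v
        have h1 := ht_pos (T := Tl) v
        have h2 := ht_le_height hTl v
        exact hstrong v _ (by rw [hdj (Tl.ht v) h1 h2])
      have hmonog := mono_of_meet hgm
      have hhb : ∀ j, 1 ≤ j → j ≤ l → 1 ≤ h j ∧ h j ≤ n :=
        fun j _ _ => ⟨ht_pos _, ht_le_height hTn _⟩
      have hmono : ∀ j j', 1 ≤ j → j < j' → j' ≤ l → h j < h j' := by
        intro j j' h1 h2 h3
        have hta : Tl.ht (Tl.desc rootl j') = j' := hdj j' (by omega) h3
        set a := Tl.desc rootl j' with hadef
        set b := Tl.anc a j with hbdef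
        have htb : Tl.ht b = j := ht_anc h1 (by omega)
        have hba : Tl.le b a := anc_le a j
        have hbne : b ≠ a := fun hcon => by rw [hcon] at htb; omega
        have hg1 : Tn.ht (g b) < Tn.ht (g a) :=
          ht_lt_of_lt (hmonog _ _ hba) (fun hc => hbne (hgi hc))
        have e1 : Tn.ht (g b) = h j := by rw [hH, htb]
        have e2 : Tn.ht (g a) = h j' := by rw [hH, hta]
        omega
      obtain ⟨i, h', hi1, hi2, hP1, hP2, hP3a, hP3b, hP4, hLP⟩ :
          ∃ (i : ℕ) (h' : ℕ → ℕ),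
            1 ≤ i ∧ i ≤ l + 1 ∧
            (∀ j, 1 ≤ j → j ≤ l + 1 → 1 ≤ h' j ∧ h' j ≤ n) ∧
            (∀ j j', 1 ≤ j → j < j' → j' ≤ l + 1 → h' j < h' j') ∧
            (∀ j, 1 ≤ j → j < i → h' j = h j) ∧
            (∀ j, i < j → j ≤ l + 1 → h' j = h (j - 1)) ∧
            (i ≤ l → h' i + 1 = h i) ∧
            (h l = n → h' (l + 1) = n) := by
        by_cases htop : h l = n
        · -- find a gap, insert inside
          set h0 : ℕ → ℕ := fun j => if j = 0 then 0 else h j with hh0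
          have hgap : ∃ i, 1 ≤ i ∧ i ≤ l ∧ h0 (i - 1) + 2 ≤ h0 i := by
            by_contra hcon
            push_neg at hcon
            have haux : ∀ j, j ≤ l → h0 j ≤ j := by
              intro j
              induction j with
              | zero => intro _; simp [hh0]
              | succ m ihm =>
                intro hjl
                have h1 := hcon (m + 1) (by omega) (by omega)
                simp only [Nat.add_sub_cancel] at h1
                have h2 := ihm (by omega)
                omega
            have h3 := haux l le_rfl
            have h4 : h0 l = h l := by
              simp only [hh0]; rw [if_neg (by omega : ¬ l = 0)]
            omega
          obtain ⟨i, hi1', hil, hgap0⟩ := hgap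
          have e2 : h0 i = h i := by
            simp only [hh0]; rw [if_neg (by omega : ¬ i = 0)]
          rw [e2] at hgap0
          have hgi2 : 2 ≤ h i := by omega
          have hgap3 : 2 ≤ i → h (i - 1) + 2 ≤ h i := by
            intro hi2'
            have e1 : h0 (i - 1) = h (i - 1) := by
              simp only [hh0]; rw [if_neg (by omega : ¬ i - 1 = 0)]
            omega
          refine ⟨i, fun j => if j < i then h j else if j = i then h i - 1 else h (j - 1),
            by omega, by omega, ?_, ?_, ?_, ?_, ?_, ?_⟩
          · intro j hj1 hjl1
            by_cases c1 : j < i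
            · simp only [if_pos c1]; exact hhb j hj1 (by omega)
            · by_cases c2 : j = i
              · simp only [if_neg c1, if_pos c2]
                have := hhb i (by omega) hil
                omega
              · simp only [if_neg c1, if_neg c2]
                have := hhb (j - 1) (by omega) (by omega)
                omega
          · intro j j' hj1 hjj hj'le
            by_cases c1 : j' < i
            · simp only [if_pos (by omega : j < i), if_pos c1]
              exact hmono j j' hj1 hjj (by omega)
            · by_cases c2 : j' = i
              · simp only [if_pos (by omega : j < i), if_neg c1, if_pos c2]
                have hile : h (i - 1) + 2 ≤ h i := hgap3 (by omega)
                have hle2 : h j ≤ h (i - 1) := by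
                  rcases Nat.lt_or_ge j (i - 1) with hx | hx
                  · exact le_of_lt (hmono j (i - 1) hj1 hx (by omega))
                  · exact le_of_eq (congrArg h (by omega))
                omega
              · have c3 : i < j' := by omega
                simp only [if_neg (show ¬ j' < i by omega), if_neg c2]
                by_cases d1 : j < i
                · simp only [if_pos d1]
                  exact hmono j (j' - 1) hj1 (by omega) (by omega)
                · by_cases d2 : j = i
                  · simp only [if_neg d1, if_pos d2]
                    have hle3 : h i ≤ h (j' - 1) := by
                      rcases Nat.lt_or_ge i (j' - 1) with hx | hx
                      · exact le_of_lt (hmono i (j' - 1) (by omega) hx (by omega))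
                      · exact le_of_eq (congrArg h (by omega))
                    omega
                  · simp only [if_neg d1, if_neg d2]
                    exact hmono (j - 1) (j' - 1) (by omega) (by omega) (by omega)
          · intro j _ hji
            simp only [if_pos hji]
          · intro j hij hjle
            simp only [if_neg (show ¬ j < i by omega), if_neg (show j ≠ i by omega)]
          · intro _
            simp only [if_neg (lt_irrefl i), eq_self_iff_true, if_true, ite_true]
            omega
          · intro _
            simp only [if_neg (show ¬ l + 1 < i by omega), if_neg (show l + 1 ≠ i by omega),
              Nat.add_sub_cancel]
            exact htop
        · -- insert at the top
          refine ⟨l + 1, fun j => if j ≤ l then h j else h l + 1, by omega, le_rfl,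
            ?_, ?_, ?_, ?_, ?_, ?_⟩
          · intro j hj1 hjl1
            by_cases c : j ≤ l
            · simp only [if_pos c]; exact hhb j hj1 c
            · simp only [if_neg c]
              have h1 := hhb l hl1 le_rfl
              omega
          · intro j j' hj1 hjj hj'le
            by_cases c : j' ≤ l
            · simp only [if_pos (by omega : j ≤ l), if_pos c]
              exact hmono j j' hj1 hjj c
            · simp only [if_pos (by omega : j ≤ l), if_neg c]
              have hle2 : h j ≤ h l := by
                rcases Nat.lt_or_ge j l with hx | hx
                · exact le_of_lt (hmono j l hj1 hx le_rfl)
                · exact le_of_eq (congrArg h (by omega))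
              omega
          · intro j _ hji
            simp only [if_pos (by omega : j ≤ l)]
          · intro j hij hjle
            exact absurd hjle (by omega)
          · intro hcon
            exact absurd hcon (by omega)
          · intro hcon
            exact absurd hcon htop
      obtain ⟨G, hGi, hGm, hGl, hGht, hGsurj⟩ := Ffun_main hk hl1 hTl hTl1 hTn hroot hH
        hi1 hi2 hP1 hP2 hP3a hP3b hP4 hgi hgm hgl
      obtain ⟨g₁, hcomm, hg1i, hg1m, hg1l⟩ := factor_through hgi hgm hgl hGi hGm hGl hGsurj
      have hinj' : ∀ a b, 1 ≤ a → a ≤ l + 1 → 1 ≤ b → b ≤ l + 1 → h' a = h' b → a = b := by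
        intro a b ha1 ha2 hb1 hb2 hab
        rcases Nat.lt_trichotomy a b with hor | hor | hor
        · have := hP2 a b ha1 hor hb2; omega
        · exact hor
        · have := hP2 b a hb1 hor ha2; omega
      have hg1ht : ∀ v, h' (Tl1.ht (g₁ v)) = h (Tl.ht v) := by
        intro v
        rw [← hGht (g₁ v), hcomm, hH]
      refine ⟨g₁, G, ⟨hg1i, hg1m, hg1l, cond4 hTl hTl1 hg1i hg1m⟩, ?_,
        ⟨hGi, hGm, hGl, cond4 hTl1 hTn hGi hGm⟩, ?_, ?_, ?_⟩
      · intro v w hvw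
        apply hinj' _ _ (ht_pos _) (ht_le_height hTl1 _) (ht_pos _) (ht_le_height hTl1 _)
        rw [hg1ht, hg1ht, hvw]
      · intro v w hvw
        rw [hGht, hGht, hvw]
      · funext v; exact (hcomm v).symm
      · intro hlp
        have hleafl : h l = n := by
          obtain ⟨lf, hlfle, hlf⟩ := exists_leaf_above (T := Tl) x0
          have h1 : Tl.ht lf = l := (leaf_iff_ht hTl).1 hlf
          have h2 : Tn.Leaf (g lf) := hlp lf hlf
          have h3 : Tn.ht (g lf) = n := (leaf_iff_ht hTn).1 h2
          rw [hH, h1] at h3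
          exact h3
        have hl1n := hLP hleafl
        constructor
        · intro v hv
          have h1 : Tl.ht v = l := (leaf_iff_ht hTl).1 hv
          rw [leaf_iff_ht hTl1]
          apply hinj' _ _ (ht_pos _) (ht_le_height hTl1 _) (by omega) le_rfl
          rw [hg1ht, h1, hleafl, hl1n]
        · intro w hw
          have h1 : Tl1.ht w = l + 1 := (leaf_iff_ht hTl1).1 hw
          rw [leaf_iff_ht hTn, hGht, h1, hl1n]
  constructor
  · intro g hemb hstrong
    obtain ⟨g₁, g₂, he1, hs1, he2, hs2, hcomp, _⟩ := main g hemb hstrong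
    exact ⟨g₁, g₂, he1, hs1, he2, hs2, hcomp⟩
  · intro g hemb hstrong hlp
    obtain ⟨g₁, g₂, he1, hs1, he2, hs2, hcomp, hlp2⟩ := main g hemb hstrong
    obtain ⟨hL1, hL2⟩ := hlp2 hlp
    exact ⟨g₁, g₂, he1, hs1, hL1, he2, hs2, hL2, hcomp⟩
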